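/- arXiv:2503.22944 — 6 statements merged into one kernel-verified Lean document; each statement's English description precedes it below -/
import Mathlib

section
/- Let (X,d) be a compact metric space and T : X → X a continuous map. If for every ε > 0 one has lim_{n→∞} Span(T,n,ε)/n = 0 (a condition which the paper derives from the generalized entropy of T being strictly less than the linear order of growth [n]), then the topological entropy of the induced hyperspace map is zero: h(T_K) = 0. -/
open Metric Filter TopologicalSpace MeasureTheory Set

namespace Paper

variable {α : Type*}

/-- `A` is `(n,ε)`-separated for the iterates of `S`, w.r.t. the distance function `D`. -/
def IsSep (D : α → α → ℝ) (S : α → α) (n : ℕ) (ε : ℝ) (A : Set α) : Prop :=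
  ∀ x ∈ A, ∀ y ∈ A, x ≠ y → ∃ i < n, ε ≤ D (S^[i] x) (S^[i] y)

/-- `Sep(S,n,ε)`: maximal cardinality of an `(n,ε)`-separated set. -/
noncomputable def sep (D : α → α → ℝ) (S : α → α) (n : ℕ) (ε : ℝ) : ℕ :=
  sSup {k | ∃ A : Finset α, A.card = k ∧ IsSep D S n ε ↑A}

/-- `E` is `(n,ε)`-spanning for the iterates of `S`, w.r.t. the distance function `D`. -/
def IsSpan (D : α → α → ℝ) (S : α → α) (n : ℕ) (ε : ℝ) (E : Finset α) : Prop :=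
  ∀ x : α, ∃ y ∈ E, ∀ i < n, D (S^[i] x) (S^[i] y) < ε

/-- `Span(S,n,ε)`: minimal cardinality of an `(n,ε)`-spanning set. -/
noncomputable def span (D : α → α → ℝ) (S : α → α) (n : ℕ) (ε : ℝ) : ℕ :=
  sInf {k | ∃ E : Finset α, E.card = k ∧ IsSpan D S n ε E}

variable {X : Type*} [MetricSpace X]

/-- The induced hyperspace map `T_K` on nonempty compact (= closed, for `X` compact) subsets. -/
noncomputable def indK (T : X → X) (hT : Continuous T) :
    NonemptyCompacts X → NonemptyCompacts X :=
  fun W => ⟨⟨T '' ↑W, W.isCompact.image hT⟩, W.nonempty.image T⟩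

variable [MeasurableSpace X] [BorelSpace X]

/-- The measure-induced (push-forward) map `T_*` on Borel probability measures. -/
noncomputable def push (T : X → X) (hT : Continuous T) :
    ProbabilityMeasure X → ProbabilityMeasure X :=
  fun μ => ⟨(μ : Measure X).map T, Measure.isProbabilityMeasure_map hT.measurable.aemeasurable⟩

/-- The (one-sided) Lévy–Prokhorov metric
`ρ(μ,ν) = inf {δ > 0 | μ(A) ≤ ν(A_δ) + δ for all Borel A}`. -/
noncomputable def prokhorov (μ ν : ProbabilityMeasure X) : ℝ :=
  sInf {δ : ℝ | 0 < δ ∧ ∀ A : Set X, MeasurableSet A →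
    (μ A : ℝ) ≤ (ν (Metric.thickening δ A) : ℝ) + δ}

end Paper

section Aux

open Paper Metric Set Filter

variable {X : Type*} [MetricSpace X]

private lemma exists_span [CompactSpace X] (T : X → X) (hT : Continuous T)
    (n : ℕ) {ε : ℝ} (hε : 0 < ε) : ∃ E : Finset X, IsSpan dist T n ε E := by
  have hcont : ∀ i : ℕ, Continuous (T^[i]) := fun i => by
    induction i with
    | zero => exact continuous_id
    | succ k ih => rw [Function.iterate_succ]; exact ih.comp hT
  obtain ⟨t, ht⟩ := IsCompact.elim_finite_subcover (isCompact_univ (X := X))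
    (fun y : X => ⋂ i ∈ Finset.range n, (T^[i]) ⁻¹' Metric.ball (T^[i] y) ε)
    (fun y => isOpen_biInter_finset fun i _ => (hcont i).isOpen_preimage _ isOpen_ball)
    (fun x _ => Set.mem_iUnion.2 ⟨x, by simp [hε]⟩)
  refine ⟨t, fun x => ?_⟩
  have hx := ht (Set.mem_univ x)
  simp only [Set.mem_iUnion, Set.mem_iInter, Set.mem_preimage, Finset.mem_range,
    Metric.mem_ball] at hx
  obtain ⟨y, hy, hxy⟩ := hx
  exact ⟨y, hy, fun i hi => hxy i hi⟩

private lemma indK_iterate [CompactSpace X] (T : X → X) (hT : Continuous T) (i : ℕ)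
    (W : NonemptyCompacts X) : (((indK T hT)^[i] W : Set X)) = T^[i] '' (W : Set X) := by
  induction i with
  | zero => simp
  | succ k ih =>
    rw [Function.iterate_succ_apply', Function.iterate_succ']
    show T '' (((indK T hT)^[k] W : Set X)) = _
    rw [ih, ← Set.image_comp]

private lemma span_indK_le [CompactSpace X] (T : X → X) (hT : Continuous T)
    (n : ℕ) {ε : ℝ} (hε : 0 < ε) :
    span dist (indK T hT) n ε ≤ 2 ^ span dist T n (ε / 2) := by
  classical
  have hε2 : 0 < ε / 2 := by linarith
  -- a spanning set of minimal cardinality for T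
  have hne : {k | ∃ E : Finset X, E.card = k ∧ IsSpan dist T n (ε / 2) E}.Nonempty := by
    obtain ⟨E, hE⟩ := exists_span T hT n hε2
    exact ⟨E.card, E, rfl, hE⟩
  obtain ⟨E, hEcard, hE⟩ := Nat.sInf_mem hne
  -- build the spanning family of subsets of E
  set P : Finset (Finset X) := (E.powerset.filter fun s => s.Nonempty) with hP
  have hmem : ∀ s ∈ P, (s : Set X).Nonempty := by
    intro s hs
    rw [hP, Finset.mem_filter] at hs
    exact Finset.coe_nonempty.mpr hs.2
  set F : Finset (NonemptyCompacts X) := P.attach.image (fun s =>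
    (⟨⟨((s.1 : Finset X) : Set X), (s.1 : Finset X).finite_toSet.isCompact⟩,
      hmem s.1 s.2⟩ : NonemptyCompacts X)) with hF
  have hFspan : IsSpan dist (indK T hT) n ε F := by
    intro W
    set s : Finset X := E.filter
      (fun y => ∃ x ∈ (W : Set X), ∀ i < n, dist (T^[i] x) (T^[i] y) < ε / 2) with hs
    have hsE : ∀ y ∈ s, ∃ x ∈ (W : Set X), ∀ i < n,
        dist (T^[i] x) (T^[i] y) < ε / 2 := by
      intro y hy
      rw [hs, Finset.mem_filter] at hy
      exact hy.2
    have hWs : ∀ x ∈ (W : Set X), ∃ y ∈ s, ∀ i < n,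
        dist (T^[i] x) (T^[i] y) < ε / 2 := by
      intro x hx
      obtain ⟨y, hyE, hy⟩ := hE x
      exact ⟨y, by rw [hs, Finset.mem_filter]; exact ⟨hyE, x, hx, hy⟩, hy⟩
    have hsne : s.Nonempty := by
      obtain ⟨x, hx⟩ := W.nonempty
      obtain ⟨y, hy, _⟩ := hWs x hx
      exact ⟨y, hy⟩
    have hsP : s ∈ P := by
      rw [hP, Finset.mem_filter]
      exact ⟨Finset.mem_powerset.2 (Finset.filter_subset _ _), hsne⟩
    refine ⟨⟨⟨(s : Set X), s.finite_toSet.isCompact⟩, hmem s hsP⟩, ?_, ?_⟩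
    · rw [hF]
      exact Finset.mem_image.2 ⟨⟨s, hsP⟩, Finset.mem_attach _ _, rfl⟩
    · intro i hi
      rw [NonemptyCompacts.dist_eq, indK_iterate, indK_iterate]
      have h1 : hausdorffDist (T^[i] '' (W : Set X)) (T^[i] '' (s : Set X)) ≤ ε / 2 := by
        apply hausdorffDist_le_of_mem_dist hε2.le
        · rintro _ ⟨x, hx, rfl⟩
          obtain ⟨y, hy, hxy⟩ := hWs x hx
          exact ⟨T^[i] y, Set.mem_image_of_mem _ (by exact_mod_cast hy), (hxy i hi).le⟩
        · rintro _ ⟨y, hy, rfl⟩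
          obtain ⟨x, hx, hxy⟩ := hsE y (by exact_mod_cast hy)
          exact ⟨T^[i] x, Set.mem_image_of_mem _ hx, by
            rw [dist_comm]; exact (hxy i hi).le⟩
      exact lt_of_le_of_lt h1 (by linarith)
  calc span dist (indK T hT) n ε ≤ F.card := Nat.sInf_le ⟨F, rfl, hFspan⟩
    _ ≤ P.attach.card := Finset.card_image_le
    _ = P.card := Finset.card_attach
    _ ≤ E.powerset.card := Finset.card_le_card (Finset.filter_subset _ _)
    _ = 2 ^ span dist T n (ε / 2) := by rw [Finset.card_powerset, hEcard]; rfl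

end Aux


open Paper Filter in
/-- If `Span(T,n,ε)/n → 0` for every `ε > 0` (which follows from the
generalized entropy of `T` being strictly less than the linear order of growth), then the
topological entropy of the induced hyperspace map `T_K` is zero. -/
theorem induced_hyperspace_zero_entropy
    {X : Type*} [MetricSpace X] [CompactSpace X] (T : X → X) (hT : Continuous T)
    (h : ∀ ε > (0 : ℝ),
      Filter.Tendsto (fun n : ℕ => (span dist T n ε : ℝ) / n) Filter.atTop (nhds 0)) :
    Filter.Tendsto (fun ε : ℝ =>
        Filter.limsup
          (fun n : ℕ => ENNReal.ofReal (Real.log (span dist (indK T hT) n ε) / n))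
          Filter.atTop)
      (nhdsWithin 0 (Set.Ioi 0)) (nhds (0 : ENNReal)) := by
  have key : ∀ ε > (0:ℝ), Filter.limsup
      (fun n : ℕ => ENNReal.ofReal (Real.log (span dist (indK T hT) n ε) / n))
      Filter.atTop = 0 := by
    intro ε hε
    have hε2 : (0:ℝ) < ε / 2 := by linarith
    -- upper bound sequence
    set g : ℕ → ENNReal := fun n =>
      ENNReal.ofReal ((span dist T n (ε/2) : ℝ) / n * Real.log 2) with hg
    have hle : ∀ n : ℕ, ENNReal.ofReal (Real.log (span dist (indK T hT) n ε) / n) ≤ g n := by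
      intro n
      apply ENNReal.ofReal_le_ofReal
      have hlog : Real.log (span dist (indK T hT) n ε)
          ≤ (span dist T n (ε/2) : ℝ) * Real.log 2 := by
        rcases Nat.eq_zero_or_pos (span dist (indK T hT) n ε) with h0 | hpos
        · rw [h0]
          simp only [Nat.cast_zero, Real.log_zero]
          positivity
        · calc Real.log (span dist (indK T hT) n ε)
              ≤ Real.log ((2:ℝ) ^ span dist T n (ε/2)) := by
                apply Real.log_le_log (by exact_mod_cast hpos)
                exact_mod_cast span_indK_le T hT n hε
            _ = (span dist T n (ε/2) : ℝ) * Real.log 2 := by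
                rw [Real.log_pow]
      rcases Nat.eq_zero_or_pos n with rfl | hn
      · simp
      · rw [div_mul_eq_mul_div]
        apply div_le_div_of_nonneg_right hlog
        exact Nat.cast_nonneg n
    have hg0 : Filter.Tendsto g Filter.atTop (nhds 0) := by
      have := ((h (ε/2) hε2).mul_const (Real.log 2))
      rw [zero_mul] at this
      have := (ENNReal.continuous_ofReal.tendsto 0).comp this
      simpa [hg, Function.comp_def] using this
    refine le_antisymm ?_ zero_le
    calc Filter.limsup (fun n : ℕ =>
          ENNReal.ofReal (Real.log (span dist (indK T hT) n ε) / n)) Filter.atTop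
        ≤ Filter.limsup g Filter.atTop :=
          Filter.limsup_le_limsup (Filter.Eventually.of_forall hle)
      _ = 0 := hg0.limsup_eq
  have : (fun ε : ℝ => Filter.limsup
      (fun n : ℕ => ENNReal.ofReal (Real.log (span dist (indK T hT) n ε) / n))
      Filter.atTop) =ᶠ[nhdsWithin 0 (Set.Ioi 0)] (fun _ => (0 : ENNReal)) := by
    filter_upwards [self_mem_nhdsWithin] with ε hε
    exact key ε hε
  rw [Filter.tendsto_congr' this]
  exact tendsto_const_nhds
end

section
/- Let (X,d) be a compact metric space and T : X → X a continuous map. Then for every n ∈ ℕ and every ε > 0, the minimal cardinality of an (n,ε)-spanning set for the induced hyperspace map satisfies Span(T_K, n, ε) ≤ 2^{Span(T, n, ε)}. -/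
open Metric Filter TopologicalSpace MeasureTheory Set

open Paper in
lemma indK_iterate_coe {X : Type*} [MetricSpace X] (T : X → X) (hT : Continuous T)
    (i : ℕ) (W : NonemptyCompacts X) :
    (((indK T hT)^[i] W : NonemptyCompacts X) : Set X) = T^[i] '' (W : Set X) := by
  induction i with
  | zero => simp
  | succ i ih =>
    rw [Function.iterate_succ_apply']
    show T '' (((indK T hT)^[i] W : NonemptyCompacts X) : Set X) = _
    rw [ih, show T^[i+1] = T ∘ T^[i] from Function.iterate_succ' T i, Set.image_comp]

open Paper in
/-- `Span(T_K, n, ε) ≤ 2 ^ Span(T, n, ε)` for all `n` and `ε > 0`. -/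
theorem span_induced_hyperspace_le_two_pow_span
    {X : Type*} [MetricSpace X] [CompactSpace X] (T : X → X) (hT : Continuous T) :
    ∀ (n : ℕ), ∀ ε > (0 : ℝ), span dist (indK T hT) n ε ≤ 2 ^ span dist T n ε := by
  classical
  intro n ε hε
  -- existence of a finite spanning set for T
  have hne : {k | ∃ E : Finset X, E.card = k ∧ IsSpan dist T n ε E}.Nonempty := by
    obtain ⟨t, ht⟩ := IsCompact.elim_finite_subcover (isCompact_univ (X := X))
      (fun y : X => {x | ∀ i < n, dist (T^[i] x) (T^[i] y) < ε})
      (by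
        intro y
        show IsOpen {x | ∀ i < n, dist (T^[i] x) (T^[i] y) < ε}
        have : {x | ∀ i < n, dist (T^[i] x) (T^[i] y) < ε}
            = ⋂ i ∈ Finset.range n, {x | dist (T^[i] x) (T^[i] y) < ε} := by
          ext x; simp [Finset.mem_range]
        rw [this]
        exact isOpen_biInter_finset fun i _ =>
          isOpen_lt ((hT.iterate i).dist continuous_const) continuous_const)
      (by
        intro x _
        exact Set.mem_iUnion.mpr ⟨x, fun i _ => by simpa using hε⟩)
    refine ⟨t.card, t, rfl, fun x => ?_⟩
    have := ht (Set.mem_univ x)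
    obtain ⟨y, hy, hxy⟩ := Set.mem_iUnion₂.mp this
    exact ⟨y, hy, hxy⟩
  obtain ⟨E, hEcard, hEspan⟩ := Nat.sInf_mem hne
  -- the spanning family for the hyperspace: nonempty subsets of E
  set F : Finset (NonemptyCompacts X) :=
    (E.powerset.filter fun S => S.Nonempty).attach.image
      (fun p => (⟨⟨(p.1 : Set X), p.1.finite_toSet.isCompact⟩,
        Finset.coe_nonempty.mpr (Finset.mem_filter.mp p.2).2⟩ : NonemptyCompacts X)) with hF
  have hFcard : F.card ≤ 2 ^ span dist T n ε := by
    calc F.card ≤ (E.powerset.filter fun S => S.Nonempty).attach.card :=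
          Finset.card_image_le
      _ = (E.powerset.filter fun S => S.Nonempty).card := Finset.card_attach
      _ ≤ E.powerset.card := Finset.card_filter_le _ _
      _ = 2 ^ E.card := Finset.card_powerset E
      _ = 2 ^ span dist T n ε := by rw [hEcard]; rfl
  have hFspan : IsSpan dist (indK T hT) n ε F := by
    intro W
    set S : Finset X :=
      E.filter (fun y => ∃ x ∈ (W : Set X), ∀ i < n, dist (T^[i] x) (T^[i] y) < ε) with hSdef
    have hS : S.Nonempty := by
      obtain ⟨x0, hx0⟩ := W.nonempty
      obtain ⟨y, hyE, hy⟩ := hEspan x0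
      exact ⟨y, Finset.mem_filter.mpr ⟨hyE, x0, hx0, hy⟩⟩
    have hSmem : S ∈ E.powerset.filter fun S => S.Nonempty :=
      Finset.mem_filter.mpr ⟨Finset.mem_powerset.mpr (Finset.filter_subset _ _), hS⟩
    refine ⟨_, Finset.mem_image_of_mem _ (Finset.mem_attach _ ⟨S, hSmem⟩), ?_⟩
    intro i hi
    have hn : 0 < n := (Nat.zero_le i).trans_lt hi
    have hrn : (Finset.range n).Nonempty := ⟨0, Finset.mem_range.mpr hn⟩
    set g : X → X → ℝ := fun x y => (Finset.range n).sup' hrn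
      (fun j => dist (T^[j] x) (T^[j] y)) with hgdef
    have hg0 : ∀ x y, 0 ≤ g x y :=
      fun x y => le_trans dist_nonneg (Finset.le_sup' (fun j => dist (T^[j] x) (T^[j] y)) (Finset.mem_range.mpr hn))
    set h : X → ℝ := fun x => S.inf' hS (fun y => g x y) with hhdef
    have hcont : Continuous h :=
      Continuous.finset_inf'_apply hS (fun y _ =>
        Continuous.finset_sup'_apply hrn (fun j _ =>
          (hT.iterate j).dist continuous_const))
    obtain ⟨x₀, hx₀W, hx₀max⟩ := W.isCompact.exists_isMaxOn W.nonempty hcont.continuousOn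
    have hr : h x₀ < ε := by
      obtain ⟨y, hyE, hy⟩ := hEspan x₀
      have hyS : y ∈ S := Finset.mem_filter.mpr ⟨hyE, x₀, hx₀W, hy⟩
      refine lt_of_le_of_lt (Finset.inf'_le _ hyS) ?_
      simp only [hgdef]
      exact (Finset.sup'_lt_iff _).mpr (fun j hj => hy j (Finset.mem_range.mp hj))
    have hchoice : ∀ y ∈ S, ∃ x, x ∈ (W : Set X) ∧ g x y < ε := by
      intro y hy
      obtain ⟨x, hxW, hx⟩ := (Finset.mem_filter.mp hy).2
      refine ⟨x, hxW, ?_⟩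
      simp only [hgdef]
      exact (Finset.sup'_lt_iff _).mpr (fun j hj => hx j (Finset.mem_range.mp hj))
    choose! c hc1 hc2 using hchoice
    set m : ℝ := S.sup' hS (fun y => g (c y) y) with hmdef
    have hm : m < ε := by
      simp only [hmdef]
      exact (Finset.sup'_lt_iff _).mpr (fun y hy => hc2 y hy)
    set δ : ℝ := max (h x₀) m with hδdef
    have hδε : δ < ε := max_lt hr hm
    have hδ0 : 0 ≤ δ := by
      refine le_trans ?_ (le_max_right _ _)
      obtain ⟨y, hy⟩ := hS
      simp only [hmdef]
      exact le_trans (hg0 (c y) y) (Finset.le_sup' (fun y => g (c y) y) hy)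
    show dist _ _ < ε
    rw [NonemptyCompacts.dist_eq, indK_iterate_coe, indK_iterate_coe]
    refine lt_of_le_of_lt (hausdorffDist_le_of_mem_dist hδ0 ?_ ?_) hδε
    · rintro p ⟨x, hxW, rfl⟩
      obtain ⟨y, hyS, hxy⟩ := Finset.exists_mem_eq_inf' hS (fun y => g x y)
      refine ⟨T^[i] y, Set.mem_image_of_mem _ (Finset.mem_coe.mpr hyS), ?_⟩
      calc dist (T^[i] x) (T^[i] y) ≤ g x y := by
            simp only [hgdef]
            exact Finset.le_sup' (fun j => dist (T^[j] x) (T^[j] y)) (Finset.mem_range.mpr hi)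
        _ = h x := hxy.symm
        _ ≤ h x₀ := hx₀max hxW
        _ ≤ δ := le_max_left _ _
    · rintro q ⟨y, hyS, rfl⟩
      have hyS' : y ∈ S := Finset.mem_coe.mp hyS
      refine ⟨T^[i] (c y), Set.mem_image_of_mem _ (hc1 y hyS'), ?_⟩
      rw [dist_comm]
      calc dist (T^[i] (c y)) (T^[i] y) ≤ g (c y) y := by
            simp only [hgdef]
            exact Finset.le_sup' (fun j => dist (T^[j] (c y)) (T^[j] y)) (Finset.mem_range.mpr hi)
        _ ≤ m := by
            simp only [hmdef]
            exact Finset.le_sup' (fun y => g (c y) y) hyS'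
        _ ≤ δ := le_max_right _ _
  exact le_trans (Nat.sInf_le ⟨F, rfl, hFspan⟩) hFcard
end

section
/- Let (X,d) be a compact metric space, T : X → X a continuous map, and ρ the Lévy–Prokhorov metric on the space M(X) of Borel probability measures on X. Then for every ε ∈ (0,1) and every n ∈ ℕ, the separated numbers of the pushforward map satisfy Sep(T_*, n, ε) ≥ Sep(T, n, ε), where the left-hand side is computed with respect to ρ and the right-hand side with respect to d. (This yields the inequality o(T_*) ≥ o(T) between generalized entropies.) -/
open Metric Filter TopologicalSpace MeasureTheory Set

section Aux
open Paper
variable {X : Type*} [MetricSpace X] [MeasurableSpace X] [BorelSpace X]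

noncomputable def diracP (x : X) : ProbabilityMeasure X := ⟨Measure.dirac x, inferInstance⟩

lemma diracP_apply_mem {x : X} {A : Set X} (hA : MeasurableSet A) (hx : x ∈ A) :
    ((diracP x) A : ℝ) = 1 := by
  simp [diracP, Measure.dirac_apply' _ hA, Set.indicator, hx]

lemma diracP_apply_not_mem {x : X} {A : Set X} (hA : MeasurableSet A) (hx : x ∉ A) :
    ((diracP x) A : ℝ) = 0 := by
  simp [diracP, Measure.dirac_apply' _ hA, Set.indicator, hx]

lemma diracP_injective : Function.Injective (diracP (X := X)) := by
  intro x y h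
  have h2 : ((diracP x) {y} : ℝ) = ((diracP y) {y} : ℝ) := by rw [h]
  by_contra hne
  rw [diracP_apply_not_mem (measurableSet_singleton y) (by simpa using hne),
    diracP_apply_mem (measurableSet_singleton y) rfl] at h2
  norm_num at h2

lemma push_iterate (T : X → X) (hT : Continuous T) (x : X) (i : ℕ) :
    (push T hT)^[i] (diracP x) = diracP (T^[i] x) := by
  induction i with
  | zero => simp
  | succ k ih =>
    rw [Function.iterate_succ_apply', ih, Function.iterate_succ_apply']
    apply Subtype.ext
    simp only [push, diracP]
    exact Measure.map_dirac' hT.measurable _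

lemma apply_le_one_real (μ : ProbabilityMeasure X) (A : Set X) : (μ A : ℝ) ≤ 1 := by
  exact_mod_cast μ.apply_le_one A

lemma apply_nonneg_real (μ : ProbabilityMeasure X) (A : Set X) : 0 ≤ (μ A : ℝ) :=
  (μ A).coe_nonneg

lemma prokhorov_dirac_ge {ε : ℝ} (hε : 0 < ε) (hε1 : ε < 1) {a b : X} (hd : ε ≤ dist a b) :
    ε ≤ prokhorov (diracP a) (diracP b) := by
  apply le_csInf
  · exact ⟨1, one_pos, fun A hA => by
      linarith [apply_le_one_real (diracP a) A, apply_nonneg_real (diracP b) (thickening 1 A)]⟩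
  · rintro δ ⟨hδ, h⟩
    by_contra hlt
    push_neg at hlt
    have hth : MeasurableSet (thickening δ {a}) := isOpen_thickening.measurableSet
    have hb : b ∉ thickening δ {a} := by
      rw [mem_thickening_iff]
      rintro ⟨z, hz, hdist⟩
      rw [mem_singleton_iff] at hz
      subst hz
      rw [dist_comm] at hdist
      linarith
    have := h {a} (measurableSet_singleton a)
    rw [diracP_apply_mem (measurableSet_singleton a) rfl,
      diracP_apply_not_mem hth hb] at this
    linarith
lemma coe_real_eq (μ : ProbabilityMeasure X) (A : Set X) :
    (μ A : ℝ) = (μ.toMeasure A).toReal := rfl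

lemma exists_grid [CompactSpace X] {ε : ℝ} (hε : 0 < ε) :
    ∃ (N M : ℕ) (c : ProbabilityMeasure X → (Fin N → Fin (M + 1))),
      ∀ μ ν : ProbabilityMeasure X, c μ = c ν → prokhorov μ ν < ε := by
  classical
  set r : ℝ := ε / 6 with hr_def
  have hr : 0 < r := by positivity
  obtain ⟨t, -, tfin, hcov⟩ := finite_cover_balls_of_compact (isCompact_univ (X := X)) hr
  set l : List X := tfin.toFinset.toList with hl_def
  set N : ℕ := l.length with hN_def
  set B : Fin N → Set X := fun j =>
    ball (l.get j) r \ ⋃ (k : Fin N) (_ : (k : ℕ) < (j : ℕ)), ball (l.get k) r with hB_def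
  have hmeas : ∀ j, MeasurableSet (B j) := fun j =>
    isOpen_ball.measurableSet.diff
      (MeasurableSet.iUnion fun _ => MeasurableSet.iUnion fun _ => isOpen_ball.measurableSet)
  have hball : ∀ j, B j ⊆ ball (l.get j) r := fun j => Set.diff_subset
  have hdisj : ∀ j k : Fin N, (k : ℕ) < (j : ℕ) → Disjoint (B j) (B k) := by
    intro j k hkj
    rw [Set.disjoint_left]
    intro a haj hak
    exact haj.2 (Set.mem_iUnion.mpr ⟨k, Set.mem_iUnion.mpr ⟨hkj, hball k hak⟩⟩)
  have hdisj' : ∀ j k : Fin N, j ≠ k → Disjoint (B j) (B k) := by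
    intro j k hjk
    rcases lt_or_gt_of_ne (fun h => hjk (Fin.ext h) : (j:ℕ) ≠ (k:ℕ)) with h | h
    · exact (hdisj k j h).symm
    · exact hdisj j k h
  have hcoverB : ∀ x : X, ∃ j, x ∈ B j := by
    intro x
    have hx : x ∈ ⋃ y ∈ t, ball y r := hcov (Set.mem_univ x)
    rw [Set.mem_iUnion₂] at hx
    obtain ⟨y, hyt, hxy⟩ := hx
    have hyl : y ∈ l := by
      rw [hl_def, Finset.mem_toList, Set.Finite.mem_toFinset]
      exact hyt
    obtain ⟨m, hm⟩ := List.mem_iff_get.mp hyl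
    have hP : ∃ q : ℕ, ∃ h : q < N, x ∈ ball (l.get ⟨q, h⟩) r :=
      ⟨m, m.2, by rw [hm]; exact hxy⟩
    set q := Nat.find hP with hq_def
    obtain ⟨hqN, hxq⟩ := Nat.find_spec hP
    refine ⟨⟨q, hqN⟩, hxq, ?_⟩
    intro hmem
    rw [Set.mem_iUnion] at hmem
    obtain ⟨k, hk⟩ := hmem
    rw [Set.mem_iUnion] at hk
    obtain ⟨hklt, hxk⟩ := hk
    exact Nat.find_min hP hklt ⟨k.2, by simpa using hxk⟩
  -- choose grid fineness
  set M : ℕ := ⌈2 * (N : ℝ) / ε⌉₊ + 1 with hM_def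
  have hM0 : (0 : ℝ) < M := by positivity
  have hNM : (N : ℝ) ≤ (M : ℝ) * (ε / 2) := by
    have h1 : 2 * (N : ℝ) / ε ≤ (M : ℝ) := by
      refine le_trans (Nat.le_ceil _) ?_
      rw [hM_def]
      push_cast
      linarith
    calc (N : ℝ) = (2 * N / ε) * (ε / 2) := by field_simp
    _ ≤ (M : ℝ) * (ε / 2) := by
        apply mul_le_mul_of_nonneg_right h1 (by positivity)
  have hfloor_le : ∀ (μ : ProbabilityMeasure X) (j : Fin N), ⌊(μ (B j) : ℝ) * M⌋₊ ≤ M := by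
    intro μ j
    have : (μ (B j) : ℝ) * M ≤ (M : ℝ) := by
      nlinarith [apply_le_one_real μ (B j), apply_nonneg_real μ (B j)]
    calc ⌊(μ (B j) : ℝ) * M⌋₊ ≤ ⌊(M : ℝ)⌋₊ := Nat.floor_le_floor this
    _ = M := Nat.floor_natCast M
  refine ⟨N, M, fun μ j => ⟨⌊(μ (B j) : ℝ) * M⌋₊, Nat.lt_succ_of_le (hfloor_le μ j)⟩, ?_⟩
  intro μ ν hc
  have hclose : ∀ j : Fin N, |(μ (B j) : ℝ) - (ν (B j) : ℝ)| ≤ 1 / M := by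
    intro j
    have hj := congrFun hc j
    have hfl : ⌊(μ (B j) : ℝ) * M⌋₊ = ⌊(ν (B j) : ℝ) * M⌋₊ := by
      simpa using congrArg Fin.val hj
    set x := (μ (B j) : ℝ)
    set y := (ν (B j) : ℝ)
    have hx0 : 0 ≤ x * M := mul_nonneg (apply_nonneg_real μ _) hM0.le
    have hy0 : 0 ≤ y * M := mul_nonneg (apply_nonneg_real ν _) hM0.le
    have h1 : (⌊x * M⌋₊ : ℝ) ≤ x * M := Nat.floor_le hx0
    have h2 : x * M < ⌊x * M⌋₊ + 1 := Nat.lt_floor_add_one _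
    have h3 : (⌊y * M⌋₊ : ℝ) ≤ y * M := Nat.floor_le hy0
    have h4 : y * M < ⌊y * M⌋₊ + 1 := Nat.lt_floor_add_one _
    rw [hfl] at h1 h2
    have h5 : y - x ≤ 1 / M := le_of_lt ((lt_div_iff₀ hM0).mpr (by nlinarith))
    have h6 : x - y ≤ 1 / M := le_of_lt ((lt_div_iff₀ hM0).mpr (by nlinarith))
    rw [abs_le]
    constructor <;> linarith
  -- now show prokhorov < ε
  have key : ∀ A : Set X, MeasurableSet A →
      (μ A : ℝ) ≤ (ν (thickening (ε/2) A) : ℝ) + ε/2 := by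
    intro A hA
    set meets : Finset (Fin N) := Finset.univ.filter (fun j => (B j ∩ A).Nonempty) with hmeets
    have hA_sub : A ⊆ ⋃ j ∈ meets, B j := by
      intro x hx
      obtain ⟨j, hj⟩ := hcoverB x
      exact Set.mem_biUnion (Finset.mem_filter.mpr ⟨Finset.mem_univ j, ⟨x, hj, hx⟩⟩) hj
    have step1 : (μ A : ℝ) ≤ ∑ j ∈ meets, (μ (B j) : ℝ) := by
      have h := (measure_mono hA_sub).trans
        (measure_biUnion_finset_le (μ := μ.toMeasure) meets B)
      rw [coe_real_eq]
      calc (μ.toMeasure A).toReal ≤ (∑ j ∈ meets, μ.toMeasure (B j)).toReal :=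
            ENNReal.toReal_mono (ENNReal.sum_lt_top.2 fun a _ => measure_lt_top _ _).ne h
      _ = ∑ j ∈ meets, (μ (B j) : ℝ) := by
          rw [ENNReal.toReal_sum (fun a _ => measure_ne_top _ _)]
          simp [coe_real_eq]
    have step2 : ∑ j ∈ meets, (μ (B j) : ℝ) ≤ ∑ j ∈ meets, (ν (B j) : ℝ) + ε / 2 := by
      calc ∑ j ∈ meets, (μ (B j) : ℝ) ≤ ∑ j ∈ meets, ((ν (B j) : ℝ) + 1 / M) := by
            apply Finset.sum_le_sum
            intro j _
            have := hclose j
            rw [abs_le] at this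
            linarith [this.2]
      _ = ∑ j ∈ meets, (ν (B j) : ℝ) + meets.card * (1 / M) := by
            rw [Finset.sum_add_distrib, Finset.sum_const, nsmul_eq_mul]
      _ ≤ ∑ j ∈ meets, (ν (B j) : ℝ) + ε / 2 := by
            have hcard : (meets.card : ℝ) ≤ N := by
              exact_mod_cast (Finset.card_le_card (Finset.filter_subset _ _)).trans
                (by simp)
            have : (meets.card : ℝ) * (1 / M) ≤ ε / 2 := by
              rw [mul_one_div, div_le_iff₀ hM0]
              calc (meets.card : ℝ) ≤ N := hcard
              _ ≤ ε / 2 * M := by linarith [hNM]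
            linarith
    have step4 : ∑ j ∈ meets, (ν (B j) : ℝ) ≤ (ν (thickening (ε/2) A) : ℝ) := by
      have hsub : ∀ j ∈ meets, B j ⊆ thickening (ε/2) A := by
        intro j hj b hb
        rw [hmeets, Finset.mem_filter] at hj
        obtain ⟨a, haB, haA⟩ := hj.2
        rw [mem_thickening_iff]
        refine ⟨a, haA, ?_⟩
        have h1 : dist b (l.get j) < r := hball j hb
        have h2 : dist a (l.get j) < r := hball j haB
        calc dist b a ≤ dist b (l.get j) + dist a (l.get j) := dist_triangle_right _ _ _
        _ < r + r := by linarith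
        _ ≤ ε / 2 := by rw [hr_def]; linarith
      have heq : ν.toMeasure (⋃ j ∈ meets, B j) = ∑ j ∈ meets, ν.toMeasure (B j) :=
        measure_biUnion_finset (fun j _ k _ hjk => hdisj' j k hjk) (fun j _ => hmeas j)
      have hle : ∑ j ∈ meets, ν.toMeasure (B j) ≤ ν.toMeasure (thickening (ε/2) A) := by
        rw [← heq]
        exact measure_mono (Set.iUnion₂_subset hsub)
      calc ∑ j ∈ meets, (ν (B j) : ℝ) = (∑ j ∈ meets, ν.toMeasure (B j)).toReal := by
            rw [ENNReal.toReal_sum (fun a _ => measure_ne_top _ _)]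
            simp [coe_real_eq]
      _ ≤ (ν.toMeasure (thickening (ε/2) A)).toReal :=
            ENNReal.toReal_mono (measure_ne_top _ _) hle
      _ = (ν (thickening (ε/2) A) : ℝ) := (coe_real_eq _ _).symm
    linarith
  have hmem : ε / 2 ∈ {δ : ℝ | 0 < δ ∧ ∀ A : Set X, MeasurableSet A →
      (μ A : ℝ) ≤ (ν (thickening δ A) : ℝ) + δ} := ⟨by positivity, key⟩
  have hbdd : BddBelow {δ : ℝ | 0 < δ ∧ ∀ A : Set X, MeasurableSet A →
      (μ A : ℝ) ≤ (ν (thickening δ A) : ℝ) + δ} := ⟨0, fun z hz => hz.1.le⟩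
  calc prokhorov μ ν ≤ ε / 2 := csInf_le hbdd hmem
  _ < ε := by linarith

lemma card_le_of_grid {α F : Type*} [Fintype F] {D : α → α → ℝ} {S : α → α} {n : ℕ} {ε : ℝ}
    (c : α → F) (hc : ∀ x y, c x = c y → D x y < ε)
    {A : Finset α} (hA : Paper.IsSep D S n ε ↑A) :
    A.card ≤ Fintype.card (Fin n → F) := by
  classical
  have hinj : Set.InjOn (fun x => fun i : Fin n => c (S^[(i : ℕ)] x)) ↑A := by
    intro x hx y hy heq
    by_contra hne
    obtain ⟨i, hi, hsep⟩ := hA x hx y hy hne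
    have := hc _ _ (congrFun heq ⟨i, hi⟩)
    linarith
  calc A.card ≤ (Finset.univ : Finset (Fin n → F)).card :=
        Finset.card_le_card_of_injOn _ (fun _ _ => Finset.mem_univ _) hinj
  _ = Fintype.card (Fin n → F) := rfl


end Aux


open Paper in
/-- For every `ε ∈ (0,1)` and every `n`, the separated numbers of the
push-forward map `T_*` (w.r.t. the Lévy–Prokhorov metric `ρ`) dominate those of `T`:
`Sep(T_*, n, ε) ≥ Sep(T, n, ε)`. -/
theorem sep_pushforward_ge_sep_base
    {X : Type*} [MetricSpace X] [CompactSpace X] [MeasurableSpace X] [BorelSpace X]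
    (T : X → X) (hT : Continuous T) :
    ∀ ε : ℝ, 0 < ε → ε < 1 → ∀ n : ℕ,
      sep dist T n ε ≤ sep prokhorov (push T hT) n ε := by
  intro ε hε hε1 n
  classical
  unfold sep
  obtain ⟨N, M, c, hc⟩ := exists_grid (X := X) hε
  apply csSup_le_csSup
  · -- bounded above
    refine ⟨Fintype.card (Fin n → (Fin N → Fin (M + 1))), ?_⟩
    rintro k ⟨A, rfl, hA⟩
    exact card_le_of_grid c (fun x y h => hc x y h) hA
  · -- nonempty
    exact ⟨0, ∅, by simp, by intro x hx; simp at hx⟩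
  · -- subset
    rintro k ⟨A, rfl, hA⟩
    refine ⟨A.image diracP, by rw [Finset.card_image_of_injective _ diracP_injective], ?_⟩
    intro μ hμ ν hν hμν
    simp only [Finset.coe_image, Set.mem_image, Finset.mem_coe] at hμ hν
    obtain ⟨x, hx, rfl⟩ := hμ
    obtain ⟨y, hy, rfl⟩ := hν
    have hxy : x ≠ y := fun h => hμν (by rw [h])
    obtain ⟨i, hi, hsep⟩ := hA x hx y hy hxy
    refine ⟨i, hi, ?_⟩
    rw [push_iterate, push_iterate]
    exact prokhorov_dirac_ge hε hε1 hsep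
end

section
/- Let (X,d) be a compact metric space, T : X → X a continuous map, and ρ the Lévy–Prokhorov metric on M(X). Then the spanning numbers of T are bounded in n at every scale if and only if the spanning numbers of the pushforward map T_* are: (for every ε > 0 there exists C > 0 with Span(T, n, ε) ≤ C for all n) if and only if (for every ε > 0 there exists C > 0 with Span(T_*, n, ε) ≤ C for all n, computed with respect to ρ). (Equivalently, the generalized entropy o(T) equals the class ⟦0⟧ of constant sequences if and only if o(T_*) = ⟦0⟧.) -/
open Metric Filter TopologicalSpace MeasureTheory Set

section Aux

open Paper Metric MeasureTheory Set
open scoped NNReal ENNReal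

namespace PaperProof
open scoped Classical

variable {α : Type*}

lemma span_le_card {D : α → α → ℝ} {S : α → α} {n : ℕ} {ε : ℝ} {E : Finset α}
    (hE : IsSpan D S n ε E) : span D S n ε ≤ E.card :=
  Nat.sInf_le ⟨E, rfl, hE⟩

lemma exists_isSpan_card_eq_span {D : α → α → ℝ} {S : α → α} {n : ℕ} {ε : ℝ}
    (h : ∃ E : Finset α, IsSpan D S n ε E) :
    ∃ E : Finset α, E.card = span D S n ε ∧ IsSpan D S n ε E := by
  obtain ⟨E0, hE0⟩ := h
  have hne : {k | ∃ E : Finset α, E.card = k ∧ IsSpan D S n ε E}.Nonempty :=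
    ⟨E0.card, E0, rfl, hE0⟩
  obtain ⟨E, hc, hsp⟩ := Nat.sInf_mem hne
  exact ⟨E, hc, hsp⟩

lemma span_eq_zero_of_isEmpty [IsEmpty α] (D : α → α → ℝ) (S : α → α) (n : ℕ) (ε : ℝ) :
    span D S n ε = 0 :=
  Nat.eq_zero_of_le_zero (le_of_le_of_eq (Nat.sInf_le ⟨∅, Finset.card_empty, fun x => isEmptyElim x⟩) rfl)

variable {X : Type*} [MetricSpace X]

lemma exists_span_base [CompactSpace X] (T : X → X) (hT : Continuous T) (n : ℕ) {ε : ℝ}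
    (hε : 0 < ε) : ∃ E : Finset X, IsSpan dist T n ε E := by
  have hU : ∀ x : X, IsOpen (⋂ i : Fin n, T^[(i : ℕ)] ⁻¹' ball (T^[(i : ℕ)] x) ε) :=
    fun x => isOpen_iInter_of_finite fun i => isOpen_ball.preimage (hT.iterate i)
  have hcov : (Set.univ : Set X) ⊆ ⋃ x : X, ⋂ i : Fin n, T^[(i : ℕ)] ⁻¹' ball (T^[(i : ℕ)] x) ε := by
    intro x _
    exact Set.mem_iUnion.2 ⟨x, Set.mem_iInter.2 fun i => mem_ball_self hε⟩
  obtain ⟨t, ht⟩ := isCompact_univ.elim_finite_subcover _ hU hcov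
  refine ⟨t, fun x => ?_⟩
  obtain ⟨y, hy, hx⟩ := Set.mem_iUnion₂.1 (ht (Set.mem_univ x))
  exact ⟨y, hy, fun i hi => Set.mem_iInter.1 hx ⟨i, hi⟩⟩

lemma finset_to_fin {T : X → X} {n : ℕ} {η : ℝ} {Y : Finset X} (hY : IsSpan dist T n η Y) :
    ∃ y : Fin Y.card → X, ∀ x : X, ∃ j, ∀ i < n, dist (T^[i] x) (T^[i] (y j)) < η := by
  classical
  refine ⟨fun j => (Y.equivFin.symm j : X), fun x => ?_⟩
  obtain ⟨y', hy', hd⟩ := hY x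
  refine ⟨Y.equivFin ⟨y', hy'⟩, fun i hi => ?_⟩
  simpa using hd i hi

variable [MeasurableSpace X] [BorelSpace X]

lemma pm_real (μ : ProbabilityMeasure X) (s : Set X) : (μ s : ℝ) = ((μ : Measure X) s).toReal := by
  rw [← μ.ennreal_coeFn_eq_coeFn_toMeasure s, ENNReal.coe_toReal]

lemma prok_one_mem (μ ν : ProbabilityMeasure X) :
    (1 : ℝ) ∈ {δ : ℝ | 0 < δ ∧ ∀ A : Set X, MeasurableSet A →
      (μ A : ℝ) ≤ (ν (Metric.thickening δ A) : ℝ) + δ} := by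
  refine ⟨one_pos, fun A _ => ?_⟩
  have h1 : (μ A : ℝ) ≤ 1 := by exact_mod_cast μ.apply_le_one A
  have h2 : (0 : ℝ) ≤ (ν (Metric.thickening 1 A) : ℝ) := (ν _).coe_nonneg
  linarith

lemma prok_bddBelow (μ ν : ProbabilityMeasure X) :
    BddBelow {δ : ℝ | 0 < δ ∧ ∀ A : Set X, MeasurableSet A →
      (μ A : ℝ) ≤ (ν (Metric.thickening δ A) : ℝ) + δ} :=
  ⟨0, fun _ hx => hx.1.le⟩

lemma prokhorov_le {μ ν : ProbabilityMeasure X} {δ : ℝ} (hδ : 0 < δ)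
    (h : ∀ A : Set X, MeasurableSet A → (μ A : ℝ) ≤ (ν (Metric.thickening δ A) : ℝ) + δ) :
    prokhorov μ ν ≤ δ :=
  csInf_le (prok_bddBelow μ ν) ⟨hδ, h⟩

lemma exists_of_prokhorov_lt {μ ν : ProbabilityMeasure X} {t : ℝ} (h : prokhorov μ ν < t) :
    ∃ δ, 0 < δ ∧ δ < t ∧ ∀ A : Set X, MeasurableSet A →
      (μ A : ℝ) ≤ (ν (Metric.thickening δ A) : ℝ) + δ := by
  obtain ⟨δ, hmem, hlt⟩ := exists_lt_of_csInf_lt ⟨1, prok_one_mem μ ν⟩ h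
  exact ⟨δ, hmem.1, hlt, hmem.2⟩

lemma push_iterate (T : X → X) (hT : Continuous T) (i : ℕ) (μ : ProbabilityMeasure X) :
    (((push T hT)^[i] μ : ProbabilityMeasure X) : Measure X) = (μ : Measure X).map T^[i] := by
  induction i with
  | zero => simp [Measure.map_id]
  | succ i ih =>
      rw [Function.iterate_succ_apply']
      have h1 : ((push T hT ((push T hT)^[i] μ)) : Measure X)
          = (((push T hT)^[i] μ : ProbabilityMeasure X) : Measure X).map T := rfl
      rw [h1, ih, Measure.map_map hT.measurable ((hT.iterate i).measurable),
        ← Function.iterate_succ' T i]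

noncomputable def dp (x : X) : ProbabilityMeasure X := ⟨Measure.dirac x, inferInstance⟩

lemma push_iterate_dirac (T : X → X) (hT : Continuous T) (i : ℕ) (x : X) :
    (push T hT)^[i] (dp x) = dp (T^[i] x) := by
  apply Subtype.ext
  show (((push T hT)^[i] (dp x) : ProbabilityMeasure X) : Measure X)
      = ((dp (T^[i] x) : ProbabilityMeasure X) : Measure X)
  rw [push_iterate]
  exact Measure.map_dirac' (hT.iterate i).measurable x

lemma dp_self (x : X) : ((dp x) {x} : ℝ) = 1 := by
  rw [pm_real]
  show (Measure.dirac x {x}).toReal = 1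
  rw [Measure.dirac_apply' x (measurableSet_singleton x)]
  simp

lemma dirac_ball_bound {z : X} {ρm : ProbabilityMeasure X} {t : ℝ}
    (h : prokhorov (dp z) ρm < t) : 1 - t ≤ (ρm (ball z t) : ℝ) := by
  obtain ⟨δ, hδ0, hδt, hδ⟩ := exists_of_prokhorov_lt h
  have h1 := hδ {z} (measurableSet_singleton z)
  rw [dp_self] at h1
  have hsub : Metric.thickening δ {z} ⊆ ball z t := by
    rw [Metric.thickening_singleton]
    exact ball_subset_ball hδt.le
  have h2 : ((ρm (Metric.thickening δ {z}) : ℝ≥0) : ℝ) ≤ ((ρm (ball z t) : ℝ≥0) : ℝ) := by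
    exact_mod_cast ρm.apply_mono hsub
  linarith

lemma close_of_dirac_both {z z' : X} {ρm : ProbabilityMeasure X} {t : ℝ} (ht2 : t < 1/2)
    (h1 : prokhorov (dp z) ρm < t) (h2 : prokhorov (dp z') ρm < t) : dist z z' < 2 * t := by
  have b1 := dirac_ball_bound h1
  have b2 := dirac_ball_bound h2
  have hnd : ¬ Disjoint (ball z t) (ball z' t) := by
    intro hd
    have hsum : (ρm : Measure X) (ball z t) + (ρm : Measure X) (ball z' t)
        = (ρm : Measure X) (ball z t ∪ ball z' t) :=
      (measure_union hd measurableSet_ball).symm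
    have hle : (ρm : Measure X) (ball z t ∪ ball z' t) ≤ 1 := prob_le_one
    have hfin1 : (ρm : Measure X) (ball z t) ≠ ∞ := measure_ne_top _ _
    have hfin2 : (ρm : Measure X) (ball z' t) ≠ ∞ := measure_ne_top _ _
    have hr : (ρm (ball z t) : ℝ) + (ρm (ball z' t) : ℝ) ≤ 1 := by
      rw [pm_real, pm_real, ← ENNReal.toReal_add hfin1 hfin2, hsum]
      calc ((ρm : Measure X) (ball z t ∪ ball z' t)).toReal
          ≤ (1 : ℝ≥0∞).toReal := ENNReal.toReal_mono ENNReal.one_ne_top hle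
        _ = 1 := by simp
    linarith
  obtain ⟨w, hw1, hw2⟩ := Set.not_disjoint_iff.1 hnd
  calc dist z z' ≤ dist z w + dist w z' := dist_triangle z w z'
    _ < t + t := by rw [mem_ball] at hw1 hw2 ; rw [dist_comm w z'] at *; rw [dist_comm z w]; linarith [hw1, hw2]
    _ = 2 * t := by ring


lemma round_weights {k N : ℕ} (hk : 0 < k) (hN : 0 < N) (r : Fin k → ℝ≥0∞)
    (hr : ∑ j, r j = 1) :
    ∃ m : Fin k → ℕ, (∑ j, m j = N) ∧
      ∀ j, r j ≤ (m j : ℝ≥0∞) / N + (if j = (⟨0, hk⟩ : Fin k) then (0:ℝ≥0∞) else 1 / (N:ℝ≥0∞)) := by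
  classical
  set z : Fin k := ⟨0, hk⟩ with hz
  have hNne : (N : ℝ≥0∞) ≠ 0 := by exact_mod_cast hN.ne'
  have hNnt : (N : ℝ≥0∞) ≠ ∞ := ENNReal.natCast_ne_top N
  have hrle : ∀ j, r j ≤ 1 := by
    intro j
    rw [← hr]
    exact Finset.single_le_sum (fun _ _ => zero_le) (Finset.mem_univ j)
  have hfin : ∀ j, (N : ℝ≥0∞) * r j ≠ ∞ :=
    fun j => ENNReal.mul_ne_top hNnt (lt_of_le_of_lt (hrle j) ENNReal.one_lt_top).ne
  set f : Fin k → ℕ := fun j => ⌊((N : ℝ≥0∞) * r j).toReal⌋₊ with hf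
  have hfl : ∀ j, (f j : ℝ≥0∞) ≤ (N : ℝ≥0∞) * r j := by
    intro j
    rw [← ENNReal.ofReal_toReal (hfin j), ← ENNReal.ofReal_natCast]
    exact ENNReal.ofReal_le_ofReal (Nat.floor_le ENNReal.toReal_nonneg)
  have hfu : ∀ j, (N : ℝ≥0∞) * r j ≤ (f j : ℝ≥0∞) + 1 := by
    intro j
    rw [← ENNReal.ofReal_toReal (hfin j)]
    calc ENNReal.ofReal (((N : ℝ≥0∞) * r j).toReal)
        ≤ ENNReal.ofReal ((f j : ℝ) + 1) :=
          ENNReal.ofReal_le_ofReal (Nat.lt_floor_add_one _).le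
      _ = (f j : ℝ≥0∞) + 1 := by
          rw [ENNReal.ofReal_add (by positivity) zero_le_one]
          simp [ENNReal.ofReal_natCast]
  set S : ℕ := ∑ j ∈ Finset.univ.erase z, f j with hS
  have hrsplit : r z + ∑ j ∈ Finset.univ.erase z, r j = 1 := by
    rw [← hr, Finset.add_sum_erase _ r (Finset.mem_univ z)]
  have hSle : (S : ℝ≥0∞) ≤ N := by
    rw [hS, Nat.cast_sum]
    calc ∑ j ∈ Finset.univ.erase z, (f j : ℝ≥0∞)
        ≤ ∑ j ∈ Finset.univ.erase z, (N : ℝ≥0∞) * r j := Finset.sum_le_sum fun j _ => hfl j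
      _ = (N : ℝ≥0∞) * ∑ j ∈ Finset.univ.erase z, r j := by rw [Finset.mul_sum]
      _ ≤ (N : ℝ≥0∞) * 1 := by
          refine mul_le_mul_right ?_ _
          rw [← hrsplit]; exact le_add_self
      _ = N := mul_one _
  have hSleN : S ≤ N := by exact_mod_cast hSle
  refine ⟨Function.update f z (N - S), ?_, ?_⟩
  · rw [← Finset.add_sum_erase _ _ (Finset.mem_univ z), Function.update_self]
    have : ∑ j ∈ Finset.univ.erase z, Function.update f z (N - S) j = S := by
      refine Finset.sum_congr rfl fun j hj => ?_
      rw [Function.update_of_ne (Finset.mem_erase.1 hj).1]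
    rw [this, Nat.sub_add_cancel hSleN]
  · intro j
    by_cases hjz : j = z
    · rw [if_pos hjz, hjz, Function.update_self, add_zero]
      rw [ENNReal.le_div_iff_mul_le (Or.inl hNne) (Or.inl hNnt)]
      rw [ENNReal.natCast_sub N S]
      refine ENNReal.le_sub_of_add_le_right (ENNReal.natCast_ne_top S) ?_
      calc r z * N + S ≤ r z * N + (N : ℝ≥0∞) * ∑ l ∈ Finset.univ.erase z, r l := by
            refine add_le_add_right ?_ _
            calc (S : ℝ≥0∞) = ∑ l ∈ Finset.univ.erase z, (f l : ℝ≥0∞) := by rw [hS, Nat.cast_sum]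
              _ ≤ ∑ l ∈ Finset.univ.erase z, (N : ℝ≥0∞) * r l :=
                  Finset.sum_le_sum fun l _ => hfl l
              _ = (N : ℝ≥0∞) * ∑ l ∈ Finset.univ.erase z, r l := by rw [Finset.mul_sum]
        _ = (N : ℝ≥0∞) * (r z + ∑ l ∈ Finset.univ.erase z, r l) := by ring
        _ = N := by rw [hrsplit, mul_one]
    · rw [if_neg hjz, Function.update_of_ne hjz]
      have : r j ≤ ((f j : ℝ≥0∞) + 1) / N := by
        rw [ENNReal.le_div_iff_mul_le (Or.inl hNne) (Or.inl hNnt), mul_comm]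
        exact hfu j
      calc r j ≤ ((f j : ℝ≥0∞) + 1) / N := this
        _ = (f j : ℝ≥0∞) / N + 1 / N := ENNReal.add_div


noncomputable def gridPM [Nonempty X] {k : ℕ} (y : Fin k → X) (N : ℕ)
    (m : Fin k → Fin (N + 1)) : ProbabilityMeasure X :=
  if h : 0 < N ∧ ∑ j, ((m j : ℕ)) = N then
    ⟨∑ j, (((m j : ℕ) : ℝ≥0∞) / N) • Measure.dirac (y j), by
      constructor
      rw [Measure.finset_sum_apply]
      have hNne : (N : ℝ≥0∞) ≠ 0 := by exact_mod_cast h.1.ne'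
      calc ∑ j, ((((m j : ℕ) : ℝ≥0∞) / N) • Measure.dirac (y j)) Set.univ
          = ∑ j, ((m j : ℕ) : ℝ≥0∞) / N := by
            refine Finset.sum_congr rfl fun j _ => ?_
            simp [Measure.smul_apply]
        _ = (∑ j, ((m j : ℕ) : ℝ≥0∞)) / N := by
            simp only [div_eq_mul_inv, ← Finset.sum_mul]
        _ = 1 := by
            rw [← Nat.cast_sum, h.2, ENNReal.div_self hNne (ENNReal.natCast_ne_top N)]⟩
  else ⟨Measure.dirac (Classical.arbitrary X), inferInstance⟩

lemma gridPM_apply [Nonempty X] {k : ℕ} (y : Fin k → X) {N : ℕ}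
    (m : Fin k → Fin (N + 1)) (h : 0 < N ∧ ∑ j, ((m j : ℕ)) = N) {s : Set X}
    (hs : MeasurableSet s) :
    ((gridPM y N m : ProbabilityMeasure X) : Measure X) s
      = ∑ j, if y j ∈ s then ((m j : ℕ) : ℝ≥0∞) / N else 0 := by
  rw [show gridPM y N m = _ from dif_pos h]
  show (∑ j, (((m j : ℕ) : ℝ≥0∞) / N) • Measure.dirac (y j)) s = _
  rw [Measure.finset_sum_apply]
  refine Finset.sum_congr rfl fun j _ => ?_
  rw [Measure.smul_apply, Measure.dirac_apply' _ hs, smul_eq_mul]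
  simp [Set.indicator_apply, mul_ite]

lemma grid_isSpan [Nonempty X] (T : X → X) (hT : Continuous T)
    (n : ℕ) {η ε : ℝ} (hη : 0 < η) (hε : 2 * η < ε)
    {k N : ℕ} (hN : 0 < N) (y : Fin k → X)
    (hy : ∀ x : X, ∃ j, ∀ i < n, dist (T^[i] x) (T^[i] (y j)) < η)
    (hkN : (k : ℝ) / N ≤ η) :
    ∃ E : Finset (ProbabilityMeasure X), E.card ≤ (N + 1) ^ k ∧
      IsSpan prokhorov (push T hT) n ε E := by
  classical
  have hk : 0 < k := (hy (Classical.arbitrary X)).choose.pos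
  refine ⟨(Finset.univ : Finset (Fin k → Fin (N + 1))).image (gridPM y N), ?_, ?_⟩
  · calc ((Finset.univ : Finset (Fin k → Fin (N + 1))).image (gridPM y N)).card
        ≤ (Finset.univ : Finset (Fin k → Fin (N + 1))).card := Finset.card_image_le
      _ = (N + 1) ^ k := by simp [Finset.card_univ]
  intro μ
  set B : Fin k → Set X := fun j => ⋂ i : Fin n, T^[(i : ℕ)] ⁻¹' ball (T^[(i : ℕ)] (y j)) η
    with hB
  have hBopen : ∀ j, IsOpen (B j) :=
    fun j => isOpen_iInter_of_finite fun i => isOpen_ball.preimage (hT.iterate i)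
  have hBmem : ∀ j x, x ∈ B j ↔ ∀ i < n, dist (T^[i] x) (T^[i] (y j)) < η := by
    intro j x
    constructor
    · intro hx i hi; exact Set.mem_iInter.1 hx ⟨i, hi⟩
    · intro hx; exact Set.mem_iInter.2 fun i => hx i i.2
  set V : Fin k → Set X := fun j => B j \ ⋃ (l : Fin k) (_ : l < j), B l with hV
  have hVm : ∀ j, MeasurableSet (V j) := fun j =>
    (hBopen j).measurableSet.diff
      (MeasurableSet.iUnion fun l => MeasurableSet.iUnion fun _ => (hBopen l).measurableSet)
  have hVB : ∀ j, V j ⊆ B j := fun j => Set.diff_subset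
  have hVd : Pairwise (Function.onFun Disjoint V) := by
    have key : ∀ a b : Fin k, a < b → Disjoint (V a) (V b) := by
      intro a b hab
      rw [Set.disjoint_left]
      intro x hxa hxb
      exact hxb.2 (Set.mem_iUnion₂.2 ⟨a, hab, hxa.1⟩)
    intro a b hab
    rcases Ne.lt_or_gt hab with h | h
    · exact key a b h
    · exact (key b a h).symm
  have hVcov : ∀ x : X, ∃ j, x ∈ V j := by
    intro x
    have hne : (Finset.univ.filter fun j => x ∈ B j).Nonempty := by
      obtain ⟨j, hj⟩ := hy x
      exact ⟨j, Finset.mem_filter.2 ⟨Finset.mem_univ j, (hBmem j x).2 hj⟩⟩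
    refine ⟨(Finset.univ.filter fun j => x ∈ B j).min' hne,
      (Finset.mem_filter.1 (Finset.min'_mem _ hne)).2, ?_⟩
    intro hmem
    obtain ⟨l, hl, hxl⟩ := Set.mem_iUnion₂.1 hmem
    exact absurd (Finset.min'_le _ l (Finset.mem_filter.2 ⟨Finset.mem_univ l, hxl⟩))
      (not_le.2 hl)
  have hUV : ⋃ j, V j = Set.univ := Set.eq_univ_of_forall fun x => Set.mem_iUnion.2 (hVcov x)
  have hr : ∑ j, (μ : Measure X) (V j) = 1 := by
    calc ∑ j, (μ : Measure X) (V j) = (μ : Measure X) (⋃ j, V j) := by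
          rw [measure_iUnion hVd hVm, tsum_fintype]
      _ = 1 := by rw [hUV]; exact measure_univ
  obtain ⟨m, hmsum, hml⟩ := round_weights hk hN (fun j => (μ : Measure X) (V j)) hr
  have hmN : ∀ j, m j < N + 1 := fun j =>
    Nat.lt_succ_of_le (hmsum ▸ Finset.single_le_sum (fun _ _ => Nat.zero_le _) (Finset.mem_univ j))
  have hmcond : 0 < N ∧ ∑ j, (((fun j => (⟨m j, hmN j⟩ : Fin (N + 1))) j : ℕ)) = N :=
    ⟨hN, by simpa using hmsum⟩
  set ν := gridPM y N (fun j => (⟨m j, hmN j⟩ : Fin (N + 1))) with hν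
  refine ⟨ν, Finset.mem_image_of_mem _ (Finset.mem_univ _), ?_⟩
  intro i hi
  have h2η : 0 < 2 * η := by linarith
  refine lt_of_le_of_lt (prokhorov_le h2η ?_) hε
  intro A hA
  have hTi : Measurable (T^[i]) := (hT.iterate i).measurable
  have hAi : MeasurableSet (T^[i] ⁻¹' A) := hTi hA
  have key : (μ : Measure X) (T^[i] ⁻¹' A)
      ≤ (ν : Measure X) (T^[i] ⁻¹' Metric.thickening η A) + ENNReal.ofReal η := by
    set J := Finset.univ.filter fun j => T^[i] (y j) ∈ Metric.thickening η A with hJ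
    have hsplit : (μ : Measure X) (T^[i] ⁻¹' A)
        = ∑ j, (μ : Measure X) (T^[i] ⁻¹' A ∩ V j) := by
      conv_lhs => rw [← Set.inter_univ (T^[i] ⁻¹' A), ← hUV, Set.inter_iUnion]
      rw [measure_iUnion
        (fun a b hab => (hVd hab).mono Set.inter_subset_right Set.inter_subset_right)
        (fun j => hAi.inter (hVm j)), tsum_fintype]
    have hstep2 : ∑ j, (μ : Measure X) (T^[i] ⁻¹' A ∩ V j)
        = ∑ j ∈ J, (μ : Measure X) (T^[i] ⁻¹' A ∩ V j) := by
      symm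
      refine Finset.sum_subset (Finset.subset_univ J) ?_
      intro j _ hj
      have hempty : T^[i] ⁻¹' A ∩ V j = ∅ := by
        rw [Set.eq_empty_iff_forall_notMem]
        rintro x ⟨hxA, hxV⟩
        refine hj (Finset.mem_filter.2 ⟨Finset.mem_univ j, ?_⟩)
        refine Metric.mem_thickening_iff.2 ⟨T^[i] x, hxA, ?_⟩
        rw [dist_comm]
        exact (hBmem j x).1 (hVB j hxV) i hi
      rw [hempty, measure_empty]
    have hstep3 : ∑ j ∈ J, (μ : Measure X) (T^[i] ⁻¹' A ∩ V j)
        ≤ ∑ j ∈ J, ((m j : ℝ≥0∞) / N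
            + (if j = (⟨0, hk⟩ : Fin k) then (0 : ℝ≥0∞) else 1 / (N : ℝ≥0∞))) :=
      Finset.sum_le_sum fun j _ =>
        le_trans (measure_mono Set.inter_subset_right) (hml j)
    have hstep5 : ∑ j ∈ J, (if j = (⟨0, hk⟩ : Fin k) then (0 : ℝ≥0∞) else 1 / (N : ℝ≥0∞))
        ≤ ENNReal.ofReal η := by
      calc ∑ j ∈ J, (if j = (⟨0, hk⟩ : Fin k) then (0 : ℝ≥0∞) else 1 / (N : ℝ≥0∞))
          ≤ ∑ j : Fin k, (if j = (⟨0, hk⟩ : Fin k) then (0 : ℝ≥0∞) else 1 / (N : ℝ≥0∞)) :=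
            Finset.sum_le_sum_of_subset (Finset.subset_univ J)
        _ ≤ ∑ _j : Fin k, 1 / (N : ℝ≥0∞) := Finset.sum_le_sum fun j _ => by
            by_cases h : j = (⟨0, hk⟩ : Fin k) <;> simp [h]
        _ = (k : ℝ≥0∞) / N := by
            rw [Finset.sum_const, Finset.card_univ, Fintype.card_fin, nsmul_eq_mul,
              mul_one_div]
        _ ≤ ENNReal.ofReal η := by
            have h1 : ((k : ℝ≥0∞)) / N = ENNReal.ofReal ((k : ℝ) / N) := by
              rw [ENNReal.ofReal_div_of_pos (by exact_mod_cast hN), ENNReal.ofReal_natCast,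
                ENNReal.ofReal_natCast]
            rw [h1]
            exact ENNReal.ofReal_le_ofReal hkN
    have hstep6 : ∑ j ∈ J, (m j : ℝ≥0∞) / N
        = (ν : Measure X) (T^[i] ⁻¹' Metric.thickening η A) := by
      rw [hν, gridPM_apply y _ hmcond (hTi Metric.isOpen_thickening.measurableSet), hJ,
        Finset.sum_filter]
      exact Finset.sum_congr rfl fun j _ => by simp [Set.mem_preimage]
    calc (μ : Measure X) (T^[i] ⁻¹' A)
        = ∑ j ∈ J, (μ : Measure X) (T^[i] ⁻¹' A ∩ V j) := hsplit.trans hstep2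
      _ ≤ ∑ j ∈ J, ((m j : ℝ≥0∞) / N
            + (if j = (⟨0, hk⟩ : Fin k) then (0 : ℝ≥0∞) else 1 / (N : ℝ≥0∞))) := hstep3
      _ = ∑ j ∈ J, (m j : ℝ≥0∞) / N
            + ∑ j ∈ J, (if j = (⟨0, hk⟩ : Fin k) then (0 : ℝ≥0∞) else 1 / (N : ℝ≥0∞)) :=
          Finset.sum_add_distrib
      _ ≤ (ν : Measure X) (T^[i] ⁻¹' Metric.thickening η A) + ENNReal.ofReal η :=
          add_le_add (le_of_eq hstep6) hstep5
  have hmono : (ν : Measure X) (T^[i] ⁻¹' Metric.thickening η A)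
      ≤ (ν : Measure X) (T^[i] ⁻¹' Metric.thickening (2 * η) A) :=
    measure_mono (Set.preimage_mono (Metric.thickening_mono (by linarith) A))
  have key2 : (μ : Measure X) (T^[i] ⁻¹' A)
      ≤ (ν : Measure X) (T^[i] ⁻¹' Metric.thickening (2 * η) A) + ENNReal.ofReal η :=
    le_trans key (add_le_add_left hmono _)
  have hμi : (((push T hT)^[i] μ) A : ℝ) = ((μ : Measure X) (T^[i] ⁻¹' A)).toReal := by
    rw [pm_real, push_iterate, Measure.map_apply hTi hA]
  have hνi : (((push T hT)^[i] ν) (Metric.thickening (2 * η) A) : ℝ)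
      = ((ν : Measure X) (T^[i] ⁻¹' Metric.thickening (2 * η) A)).toReal := by
    rw [pm_real, push_iterate, Measure.map_apply hTi Metric.isOpen_thickening.measurableSet]
  rw [hμi, hνi]
  have hfin : (ν : Measure X) (T^[i] ⁻¹' Metric.thickening (2 * η) A) ≠ ∞ := measure_ne_top _ _
  have htr := ENNReal.toReal_mono
    (ENNReal.add_ne_top.2 ⟨hfin, ENNReal.ofReal_ne_top⟩) key2
  rw [ENNReal.toReal_add hfin ENNReal.ofReal_ne_top, ENNReal.toReal_ofReal hη.le] at htr
  linarith


lemma forward_dir [CompactSpace X] [Nonempty X] (T : X → X) (hT : Continuous T)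
    (h : ∀ ε > (0 : ℝ), ∃ C > (0 : ℝ), ∀ n : ℕ, (span dist T n ε : ℝ) ≤ C) :
    ∀ ε > (0 : ℝ), ∃ C > (0 : ℝ), ∀ n : ℕ, (span prokhorov (push T hT) n ε : ℝ) ≤ C := by
  intro ε hε
  have hη : (0 : ℝ) < ε / 3 := by linarith
  have h2η : 2 * (ε / 3) < ε := by linarith
  obtain ⟨C, hC0, hC⟩ := h (ε / 3) hη
  set K := ⌊C⌋₊ with hK
  set N := max 1 ⌈C / (ε / 3)⌉₊ with hN
  have hN0 : 0 < N := lt_of_lt_of_le one_pos (le_max_left _ _)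
  refine ⟨((N + 1) ^ K : ℕ), by positivity, fun n => ?_⟩
  obtain ⟨Y, hYc, hY⟩ :=
    exists_isSpan_card_eq_span (exists_span_base T hT n hη)
  have hYC : (Y.card : ℝ) ≤ C := by rw [hYc]; exact hC n
  obtain ⟨y, hy⟩ := finset_to_fin hY
  have hkN : (Y.card : ℝ) / N ≤ ε / 3 := by
    have h1 : C / (ε / 3) ≤ (N : ℝ) := by
      calc C / (ε / 3) ≤ (⌈C / (ε / 3)⌉₊ : ℝ) := Nat.le_ceil _
        _ ≤ N := by exact_mod_cast le_max_right 1 ⌈C / (ε / 3)⌉₊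
    have hNpos : (0 : ℝ) < N := by exact_mod_cast hN0
    rw [div_le_iff₀ hNpos]
    calc (Y.card : ℝ) ≤ C := hYC
      _ ≤ ε / 3 * N := by
          rw [div_le_iff₀ hη] at h1
          linarith
  obtain ⟨E, hEc, hEs⟩ := grid_isSpan T hT n hη h2η hN0 y hy hkN
  have hle := span_le_card hEs
  have hkK : Y.card ≤ K := Nat.le_floor hYC
  have hpow : (N + 1) ^ Y.card ≤ (N + 1) ^ K :=
    Nat.pow_le_pow_right (Nat.succ_le_succ (Nat.zero_le N)) hkK
  exact_mod_cast le_trans hle (le_trans hEc hpow)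

lemma backward_dir [CompactSpace X] [Nonempty X] (T : X → X) (hT : Continuous T)
    (h : ∀ ε > (0 : ℝ), ∃ C > (0 : ℝ), ∀ n : ℕ, (span prokhorov (push T hT) n ε : ℝ) ≤ C) :
    ∀ ε > (0 : ℝ), ∃ C > (0 : ℝ), ∀ n : ℕ, (span dist T n ε : ℝ) ≤ C := by
  intro ε hε
  set t := min ε 1 / 3 with ht_def
  have hmin : 0 < min ε 1 := lt_min hε one_pos
  have ht0 : 0 < t := by rw [ht_def]; linarith
  have ht2 : t < 1 / 2 := by
    have : min ε 1 ≤ 1 := min_le_right _ _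
    rw [ht_def]; linarith
  have h2tε : 2 * t < ε := by
    have h1 : min ε 1 ≤ ε := min_le_left _ _
    rw [ht_def]; linarith
  obtain ⟨C, hC0, hC⟩ := h t ht0
  refine ⟨C, hC0, fun n => ?_⟩
  have hex : ∃ E : Finset (ProbabilityMeasure X), IsSpan prokhorov (push T hT) n t E := by
    have ht3 : (0 : ℝ) < t / 3 := by linarith
    obtain ⟨Y, hY⟩ := exists_span_base T hT n ht3
    obtain ⟨y, hy⟩ := finset_to_fin hY
    set N := max 1 ⌈(Y.card : ℝ) / (t / 3)⌉₊ with hN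
    have hN0 : 0 < N := lt_of_lt_of_le one_pos (le_max_left _ _)
    have hkN : (Y.card : ℝ) / N ≤ t / 3 := by
      have h1 : (Y.card : ℝ) / (t / 3) ≤ (N : ℝ) := by
        calc (Y.card : ℝ) / (t / 3) ≤ (⌈(Y.card : ℝ) / (t / 3)⌉₊ : ℝ) := Nat.le_ceil _
          _ ≤ N := by exact_mod_cast le_max_right 1 ⌈(Y.card : ℝ) / (t / 3)⌉₊
      have hNpos : (0 : ℝ) < N := by exact_mod_cast hN0
      rw [div_le_iff₀ hNpos]
      rw [div_le_iff₀ ht3] at h1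
      linarith
    obtain ⟨E, _, hEs⟩ := grid_isSpan T hT n ht3 (show 2 * (t / 3) < t by linarith) hN0 y hy hkN
    exact ⟨E, hEs⟩
  obtain ⟨E, hEcard, hEspan⟩ := exists_isSpan_card_eq_span hex
  have hcard : (E.card : ℝ) ≤ C := by rw [hEcard]; exact hC n
  classical
  set P : ProbabilityMeasure X → X → Prop :=
    fun ν x => ∀ i < n, prokhorov (dp (T^[i] x)) ((push T hT)^[i] ν) < t with hP
  set g : ProbabilityMeasure X → X :=
    fun ν => if hx : ∃ x, P ν x then hx.choose else Classical.arbitrary X with hg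
  have hspan : IsSpan dist T n ε (E.image g) := by
    intro x
    obtain ⟨ν, hν, hx⟩ := hEspan (dp x)
    have hPx : P ν x := by
      intro i hi
      have := hx i hi
      rwa [push_iterate_dirac T hT i x] at this
    have hgν : P ν (g ν) := by
      rw [hg]
      simp only
      rw [dif_pos ⟨x, hPx⟩]
      exact (⟨x, hPx⟩ : ∃ x, P ν x).choose_spec
    refine ⟨g ν, Finset.mem_image_of_mem g hν, fun i hi => ?_⟩
    have hclose := close_of_dirac_both ht2 (hPx i hi) (hgν i hi)
    linarith
  calc (span dist T n ε : ℝ) ≤ ((E.image g).card : ℝ) := by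
        exact_mod_cast span_le_card hspan
    _ ≤ (E.card : ℝ) := by exact_mod_cast Finset.card_image_le
    _ ≤ C := hcard

end PaperProof

end Aux

open Paper in
/-- The spanning numbers of `T` are bounded in `n` at every scale iff those of
the push-forward map `T_*` (w.r.t. the Lévy–Prokhorov metric) are; equivalently
`o(T) = ⟦0⟧ ↔ o(T_*) = ⟦0⟧`. -/
theorem base_bounded_iff_pushforward_bounded
    {X : Type*} [MetricSpace X] [CompactSpace X] [MeasurableSpace X] [BorelSpace X]
    (T : X → X) (hT : Continuous T) :
    (∀ ε > (0 : ℝ), ∃ C > (0 : ℝ), ∀ n : ℕ, (span dist T n ε : ℝ) ≤ C) ↔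
    (∀ ε > (0 : ℝ), ∃ C > (0 : ℝ), ∀ n : ℕ, (span prokhorov (push T hT) n ε : ℝ) ≤ C) := by
  rcases isEmpty_or_nonempty X with hemp | hne
  · have hPM : IsEmpty (ProbabilityMeasure X) := by
      refine ⟨fun μ => ?_⟩
      have h1 : (μ : MeasureTheory.Measure X) Set.univ = 1 := MeasureTheory.measure_univ
      rw [Set.univ_eq_empty_iff.2 hemp] at h1
      simp at h1
    constructor <;> intro _ ε hε <;> refine ⟨1, one_pos, fun n => ?_⟩
    · rw [PaperProof.span_eq_zero_of_isEmpty]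
      norm_num
    · rw [PaperProof.span_eq_zero_of_isEmpty]
      norm_num
  · exact ⟨PaperProof.forward_dir T hT, PaperProof.backward_dir T hT⟩
end

section
/- Let (X,d) be a compact metric space, T : X → X a continuous map, a : ℕ → (0,∞) a nondecreasing sequence, and ρ the Lévy–Prokhorov metric on M(X). Assume o(T) ≥ [a(n)], expressed concretely as: every nondecreasing sequence c : ℕ → [0,∞) such that for every ε > 0 there is C > 0 with Sep(T,n,ε) ≤ C·c(n) for all n, also satisfies a(n) ≤ C'·c(n) for all n, for some C' > 0. Then o(T_*) ≥ sup{[a(n)^t] : t ∈ (0,∞)}, expressed concretely as: every nondecreasing sequence c : ℕ → [0,∞) such that for every ε > 0 there is C > 0 with Sep(T_*,n,ε) ≤ C·c(n) for all n (separated sets taken in (M(X),ρ)), satisfies: for every t > 0 there is C' > 0 with a(n)^t ≤ C'·c(n) for all n. -/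
open Metric Filter TopologicalSpace MeasureTheory Set

namespace PaperProof
open Paper Finset
open scoped ENNReal NNReal Classical

/-- integer weights -/
def Wn (m j : ℕ) : ℕ := 2^(m-1-j)
def Qn (m : ℕ) : ℕ := 2^m - 1

lemma sum_two_pow (m : ℕ) : ∑ i ∈ range m, 2^i = 2^m - 1 := by
  induction m with
  | zero => simp
  | succ k ih =>
    rw [Finset.sum_range_succ, ih, pow_succ]
    have := Nat.one_le_two_pow (n := k)
    omega

lemma sum_Wn (m : ℕ) : ∑ j ∈ range m, Wn m j = Qn m := by
  unfold Wn Qn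
  have h := Finset.sum_range_reflect (fun j => 2^j) m
  rw [← sum_two_pow m, ← h]

lemma Qn_pos {m : ℕ} (hm : 0 < m) : 0 < Qn m := by
  unfold Qn
  have : 1 < 2^m := Nat.one_lt_two_pow (by omega)
  omega

lemma tail_sum {m : ℕ} (r : Fin m) :
    (∑ j : Fin m, if r < j then Wn m (j:ℕ) else 0) + 1 = Wn m (r:ℕ) := by
  have h0 : (∑ j : Fin m, if r < j then Wn m (j:ℕ) else 0)
      = ∑ j ∈ range m, (if (r:ℕ) < j then Wn m j else 0) := by
    rw [← Fin.sum_univ_eq_sum_range (fun j => if (r:ℕ) < j then Wn m j else 0) m]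
    refine Finset.sum_congr rfl fun j _ => ?_
    simp only [Fin.lt_def]
  rw [h0, ← Finset.sum_filter]
  have h1 : (range m).filter (fun j => (r:ℕ) < j) = Finset.Ico ((r:ℕ)+1) m := by
    ext a; simp [Finset.mem_filter, Finset.mem_range, Finset.mem_Ico]; omega
  rw [h1, Finset.sum_Ico_eq_sum_range]
  have hr := r.isLt
  have h2 : ∀ i ∈ range (m - ((r:ℕ)+1)), Wn m ((r:ℕ)+1+i) = 2^((m-1-(r:ℕ))-1-i) := by
    intro i hi
    simp only [Finset.mem_range] at hi
    unfold Wn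
    congr 1
    omega
  rw [Finset.sum_congr rfl h2]
  have h3 : m - ((r:ℕ)+1) = m - 1 - (r:ℕ) := by omega
  rw [h3, Finset.sum_range_reflect (fun i => 2^i) (m - 1 - (r:ℕ)), sum_two_pow]
  unfold Wn
  have : 1 ≤ 2^(m-1-(r:ℕ)) := Nat.one_le_two_pow
  omega

variable {X : Type*} [MetricSpace X] [MeasurableSpace X] [BorelSpace X]

noncomputable def atomM (m : ℕ) (u : Fin m → X) : Measure X :=
  ((Qn m : ℝ≥0∞))⁻¹ • ∑ j : Fin m, (Wn m (j:ℕ) : ℝ≥0∞) • Measure.dirac (u j)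

lemma atomM_prob (m : ℕ) (hm : 0 < m) (u : Fin m → X) :
    IsProbabilityMeasure (atomM m u) := by
  constructor
  rw [atomM, Measure.smul_apply, Measure.finset_sum_apply]
  have h1 : ∀ j : Fin m, ((Wn m (j:ℕ) : ℝ≥0∞) • Measure.dirac (u j)) Set.univ
      = (Wn m (j:ℕ) : ℝ≥0∞) := by
    intro j
    rw [Measure.smul_apply, smul_eq_mul, measure_univ, mul_one]
  rw [Finset.sum_congr rfl (fun j _ => h1 j)]
  have h2 : ∑ j : Fin m, (Wn m (j:ℕ) : ℝ≥0∞) = ((Qn m : ℕ) : ℝ≥0∞) := by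
    rw [← Nat.cast_sum]
    congr 1
    rw [Fin.sum_univ_eq_sum_range (fun j => Wn m j) m, sum_Wn]
  rw [h2, smul_eq_mul]
  refine ENNReal.inv_mul_cancel ?_ ?_
  · exact_mod_cast (Qn_pos hm).ne'
  · exact ENNReal.natCast_ne_top _

noncomputable def atomPM (m : ℕ) (hm : 0 < m) (u : Fin m → X) : ProbabilityMeasure X :=
  ⟨atomM m u, atomM_prob m hm u⟩

lemma coe_push_iterate (T : X → X) (hT : Continuous T) (i : ℕ) (μ : ProbabilityMeasure X) :
    (((push T hT)^[i] μ : ProbabilityMeasure X) : Measure X) = (μ : Measure X).map (T^[i]) := by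
  induction i with
  | zero => simp [Measure.map_id]
  | succ k ih =>
    rw [Function.iterate_succ_apply']
    show ((((push T hT)^[k] μ) : ProbabilityMeasure X) : Measure X).map T = _
    rw [ih, Measure.map_map hT.measurable (hT.measurable.iterate k), ← Function.iterate_succ']

lemma pm_coe (μ : ProbabilityMeasure X) (A : Set X) :
    ((μ A : ℝ≥0) : ℝ) = ((μ : Measure X) A).toReal := by
  rw [← ProbabilityMeasure.ennreal_coeFn_eq_coeFn_toMeasure]
  rfl

lemma pm_mono (μ : ProbabilityMeasure X) {A B : Set X} (h : A ⊆ B) :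
    ((μ A : ℝ≥0) : ℝ) ≤ ((μ B : ℝ≥0) : ℝ) := by
  exact_mod_cast μ.apply_mono h

lemma atomPM_apply (T : X → X) (hT : Continuous T) (m : ℕ) (hm : 0 < m) (u : Fin m → X)
    (i : ℕ) {B : Set X} (hB : MeasurableSet B) :
    ((((push T hT)^[i] (atomPM m hm u)) B : ℝ≥0) : ℝ)
      = ((∑ j : Fin m, if T^[i] (u j) ∈ B then Wn m (j:ℕ) else 0 : ℕ) : ℝ) / ((Qn m : ℕ) : ℝ) := by
  rw [pm_coe, coe_push_iterate, Measure.map_apply (hT.measurable.iterate i) hB]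
  show ((atomM m u) _).toReal = _
  have hpre : MeasurableSet (T^[i] ⁻¹' B) := (hT.measurable.iterate i) hB
  rw [atomM, Measure.smul_apply, Measure.finset_sum_apply]
  have h1 : ∀ j : Fin m, ((Wn m (j:ℕ) : ℝ≥0∞) • Measure.dirac (u j)) (T^[i] ⁻¹' B)
      = (if T^[i] (u j) ∈ B then (Wn m (j:ℕ) : ℝ≥0∞) else 0) := by
    intro j
    rw [Measure.smul_apply, smul_eq_mul, Measure.dirac_apply' _ hpre]
    rw [Set.indicator_apply]
    simp only [Set.mem_preimage, Pi.one_apply, mul_ite, mul_one, mul_zero]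
  rw [Finset.sum_congr rfl (fun j _ => h1 j)]
  have h2 : (∑ j : Fin m, if T^[i] (u j) ∈ B then (Wn m (j:ℕ) : ℝ≥0∞) else 0)
      = ((∑ j : Fin m, if T^[i] (u j) ∈ B then Wn m (j:ℕ) else 0 : ℕ) : ℝ≥0∞) := by
    rw [Nat.cast_sum]
    refine Finset.sum_congr rfl fun j _ => ?_
    split <;> simp
  rw [h2, smul_eq_mul, ENNReal.toReal_mul, ENNReal.toReal_inv]
  simp only [ENNReal.toReal_natCast]
  rw [div_eq_inv_mul]


/-- the separation scale -/
noncomputable def del0 (m : ℕ) (ε : ℝ) : ℝ := min ((1:ℝ)/2^m) (ε/(m+2))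

lemma del0_pos {m : ℕ} {ε : ℝ} (hε : 0 < ε) : 0 < del0 m ε := by
  apply lt_min
  · positivity
  · positivity

/-- The key separation estimate. -/
lemma key_sep (T : X → X) (hT : Continuous T) {n m : ℕ} (hm : 0 < m) {ε : ℝ} (hε : 0 < ε)
    {A : Finset X} (hA : IsSep dist T n ε ↑A)
    {u v : Fin m → X} (hu : ∀ j, u j ∈ A) (hv : ∀ j, v j ∈ A) (huv : u ≠ v) :
    ∃ i < n, del0 m ε ≤
      prokhorov ((push T hT)^[i] (atomPM m hm u)) ((push T hT)^[i] (atomPM m hm v)) := by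
  -- least index where u and v differ
  have hSne : (Finset.univ.filter (fun j : Fin m => u j ≠ v j)).Nonempty := by
    rcases Function.ne_iff.mp huv with ⟨j, hj⟩
    exact ⟨j, by simp [hj]⟩
  set r : Fin m := (Finset.univ.filter (fun j : Fin m => u j ≠ v j)).min' hSne with hr
  have hrne : u r ≠ v r := by
    have := Finset.min'_mem _ hSne
    rw [← hr] at this
    simpa using this
  have hprefix : ∀ j : Fin m, j < r → u j = v j := by
    intro j hj
    by_contra hne
    have : r ≤ j := Finset.min'_le _ j (by simp [hne])
    exact absurd hj (not_lt.mpr this)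
  obtain ⟨i, hi, hdist⟩ := hA (u r) (by exact_mod_cast hu r) (v r) (by exact_mod_cast hv r) hrne
  refine ⟨i, hi, ?_⟩
  -- lower bound the infimum
  rw [prokhorov]
  apply le_csInf
  · refine ⟨2, by norm_num, fun B _ => ?_⟩
    have h1 : ((((push T hT)^[i] (atomPM m hm u)) B : ℝ≥0) : ℝ) ≤ 1 := by
      exact_mod_cast ProbabilityMeasure.apply_le_one _ _
    have h2 : (0:ℝ) ≤ ((((push T hT)^[i] (atomPM m hm v)) (Metric.thickening 2 B) : ℝ≥0) : ℝ) :=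
      NNReal.coe_nonneg _
    linarith
  rintro b ⟨hb0, hball⟩
  by_contra hlt
  push_neg at hlt
  -- choose annulus index R
  set p : X := T^[i] (u r) with hp
  set f : Fin m → ℕ := fun j => ⌊dist (T^[i] (u j)) p / b⌋₊ with hf
  have hpig : ∃ R ∈ Finset.Icc 1 (m+1), ∀ j : Fin m, f j ≠ R := by
    have hcard : (Finset.image f Finset.univ).card < (Finset.Icc 1 (m+1)).card := by
      calc (Finset.image f Finset.univ).card ≤ (Finset.univ : Finset (Fin m)).card :=
            Finset.card_image_le
        _ = m := by simp
        _ < (Finset.Icc 1 (m+1)).card := by rw [Nat.card_Icc]; omega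
    obtain ⟨R, hR, hRim⟩ := Finset.not_subset.mp fun hsub =>
      absurd (Finset.card_le_card hsub) (not_le.mpr hcard)
    exact ⟨R, hR, fun j hj => hRim (Finset.mem_image.mpr ⟨j, Finset.mem_univ j, hj⟩)⟩
  obtain ⟨R, hRmem, hfR⟩ := hpig
  rw [Finset.mem_Icc] at hRmem
  set B : Set X := Metric.ball p (R * b) with hB
  -- evaluate the two measures
  have hmeasB : MeasurableSet B := measurableSet_ball
  have hmeasTh : MeasurableSet (Metric.thickening b B) := isOpen_thickening.measurableSet
  have hU := atomPM_apply T hT m hm u i hmeasB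
  have hV := atomPM_apply T hT m hm v i hmeasTh
  set Su : ℕ := ∑ j : Fin m, if T^[i] (u j) ∈ B then Wn m (j:ℕ) else 0 with hSu
  set Sv : ℕ := ∑ j : Fin m, if T^[i] (v j) ∈ Metric.thickening b B then Wn m (j:ℕ) else 0 with hSv
  -- basic facts about the geometry
  have hthick_sub : ∀ z : X, z ∈ Metric.thickening b B → dist z p < (R+1) * b := by
    intro z hz
    rw [Metric.mem_thickening_iff] at hz
    obtain ⟨y, hy, hzy⟩ := hz
    rw [hB, Metric.mem_ball] at hy
    calc dist z p ≤ dist z y + dist y p := dist_triangle _ _ _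
      _ < b + R * b := add_lt_add hzy hy
      _ = (R+1) * b := by ring
  -- the main counting inequality : Sv + 1 ≤ Su
  have hcount : Sv + 1 ≤ Su := by
    have hterm : ∀ j : Fin m,
        (if T^[i] (v j) ∈ Metric.thickening b B then Wn m (j:ℕ) else 0)
          + (if j = r then Wn m (j:ℕ) else 0)
        ≤ (if T^[i] (u j) ∈ B then Wn m (j:ℕ) else 0)
          + (if r < j then Wn m (j:ℕ) else 0) := by
      intro j
      rcases lt_trichotomy j r with hjr | hjr | hjr
      · -- j < r : shared atom, annulus argument
        have huvj : u j = v j := hprefix j hjr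
        have hmem : T^[i] (v j) ∈ Metric.thickening b B → T^[i] (u j) ∈ B := by
          intro hz
          rw [← huvj] at hz
          have h1 : dist (T^[i] (u j)) p < (R+1) * b := hthick_sub _ hz
          rw [hB, Metric.mem_ball]
          by_contra hge
          push_neg at hge
          have : f j = R := by
            rw [hf]
            rw [Nat.floor_eq_iff (by positivity)]
            constructor
            · rw [le_div_iff₀ hb0]
              exact le_trans (le_of_eq (by ring)) hge
            · rw [div_lt_iff₀ hb0]
              calc dist (T^[i] (u j)) p < (R+1) * b := h1
                _ = ((R:ℝ)+1) * b := by norm_num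
            
          exact hfR j this
        have hne : ¬ (j = r) := ne_of_lt hjr
        have hne2 : ¬ (r < j) := not_lt.mpr (le_of_lt hjr)
        simp only [if_neg hne, if_neg hne2, add_zero]
        split
        · rename_i hc
          rw [if_pos (hmem hc)]
        · exact Nat.zero_le _
      · -- j = r
        subst hjr
        have hRpos : (0:ℝ) < (R:ℝ) := by exact_mod_cast hRmem.1
        have hnotin : T^[i] (v r) ∉ Metric.thickening b B := by
          intro hz
          have h1 : dist (T^[i] (v r)) p < (R+1) * b := hthick_sub _ hz
          have h2 : ((R:ℝ)+1) * b ≤ ((m:ℝ)+2) * b := by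
            apply mul_le_mul_of_nonneg_right _ hb0.le
            have : (R:ℝ) ≤ (m:ℝ)+1 := by exact_mod_cast hRmem.2
            linarith
          have h3 : ((m:ℝ)+2) * b < ε := by
            have hb2 : b < ε/((m:ℝ)+2) := lt_of_lt_of_le hlt (min_le_right _ _)
            have hm2 : (0:ℝ) < (m:ℝ)+2 := by positivity
            calc ((m:ℝ)+2) * b < ((m:ℝ)+2) * (ε/((m:ℝ)+2)) := by
                  exact mul_lt_mul_of_pos_left hb2 hm2
              _ = ε := by field_simp
          have h4 : ε ≤ dist (T^[i] (v r)) p := by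
            rw [dist_comm]
            exact hdist
          have : ((R:ℝ)+1)*b ≤ dist (T^[i] (v r)) p := le_trans h2 (le_trans h3.le h4)
          linarith
        have hin : T^[i] (u r) ∈ B := by
          rw [hB, hp]
          exact Metric.mem_ball_self (mul_pos hRpos hb0)
        simp [hnotin, hin]
      · -- r < j
        have h1 : (if T^[i] (v j) ∈ Metric.thickening b B then Wn m (j:ℕ) else 0) ≤ Wn m (j:ℕ) := by
          split <;> omega
        have hne : ¬ (j = r) := ne_of_gt hjr
        simp only [if_neg hne, add_zero, if_pos hjr]
        omega
    have hsum := Finset.sum_le_sum (fun j (_ : j ∈ Finset.univ) => hterm j)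
    rw [Finset.sum_add_distrib, Finset.sum_add_distrib] at hsum
    have e1 : (∑ j : Fin m, if j = r then Wn m (j:ℕ) else 0) = Wn m (r:ℕ) := by
      rw [Finset.sum_ite_eq' Finset.univ r (fun j => Wn m (j:ℕ))]
      simp
    have e2 := tail_sum r
    rw [e1] at hsum
    omega
  -- transfer to the reals and contradict hball
  have hQpos : (0:ℝ) < ((Qn m : ℕ) : ℝ) := by exact_mod_cast Qn_pos hm
  have hineq := hball B hmeasB
  rw [hU, hV] at hineq
  have hbQ : b * ((Qn m : ℕ) : ℝ) < 1 := by
    have hb1 : b < 1/2^m := lt_of_lt_of_le hlt (min_le_left _ _)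
    have hQlt : ((Qn m : ℕ) : ℝ) < 2^m := by
      have h2 : (1:ℕ) ≤ 2^m := Nat.one_le_two_pow
      have : ((Qn m : ℕ) : ℝ) = ((2^m : ℕ) : ℝ) - 1 := by
        rw [Qn]; push_cast [h2]; ring
      rw [this]
      push_cast
      norm_num
    have h2m : (0:ℝ) < 2^m := by positivity
    calc b * ((Qn m : ℕ) : ℝ) < (1/2^m) * 2^m := by
          apply mul_lt_mul' hb1.le hQlt (by exact_mod_cast Nat.zero_le _) (by positivity)
      _ = 1 := by field_simp
  have h6 : ((Su:ℕ):ℝ) ≤ ((Sv:ℕ):ℝ) + b * ((Qn m : ℕ) : ℝ) := by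
    have h7 := mul_le_mul_of_nonneg_right hineq hQpos.le
    rw [add_mul, div_mul_cancel₀ _ hQpos.ne', div_mul_cancel₀ _ hQpos.ne'] at h7
    linarith
  have h8 : ((Su:ℕ):ℝ) < ((Sv:ℕ):ℝ) + 1 := by linarith
  have h9 : Su < Sv + 1 := by exact_mod_cast h8
  omega


/-- floor bucketing: equal floors at scale γ means within γ. -/
lemma floor_close {γ x y : ℝ} (hγ : 0 < γ) (hx : 0 ≤ x) (hy : 0 ≤ y)
    (h : ⌊x/γ⌋₊ = ⌊y/γ⌋₊) : |x - y| ≤ γ := by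
  have h1 : (⌊x/γ⌋₊ : ℝ) ≤ x/γ := Nat.floor_le (by positivity)
  have h2 : x/γ < ⌊x/γ⌋₊ + 1 := Nat.lt_floor_add_one _
  have h3 : (⌊y/γ⌋₊ : ℝ) ≤ y/γ := Nat.floor_le (by positivity)
  have h4 : y/γ < ⌊y/γ⌋₊ + 1 := Nat.lt_floor_add_one _
  have hb1 := (le_div_iff₀ hγ).mp h1
  have hb2 := (div_lt_iff₀ hγ).mp h2
  have hb3 := (le_div_iff₀ hγ).mp h3
  have hb4 := (div_lt_iff₀ hγ).mp h4
  have hk : ((⌊x/γ⌋₊:ℕ):ℝ) = ((⌊y/γ⌋₊:ℕ):ℝ) := by exact_mod_cast congrArg (Nat.cast (R := ℝ)) h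
  rw [abs_le]
  constructor <;> nlinarith

lemma bddAbove_sep_push [CompactSpace X] [Nonempty X] (T : X → X) (hT : Continuous T)
    (n : ℕ) {δ : ℝ} (hδ : 0 < δ) :
    BddAbove {k | ∃ F : Finset (ProbabilityMeasure X), F.card = k ∧
      IsSep prokhorov (push T hT) n δ ↑F} := by
  classical
  obtain ⟨s, -, hsfin, hcov⟩ :=
    finite_cover_balls_of_compact (isCompact_univ (X := X)) (show (0:ℝ) < δ/6 by linarith)
  set lst : List X := hsfin.toFinset.toList with hlst
  set K : ℕ := lst.length with hK
  set x0 : X := Classical.arbitrary X with hx0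
  set g : ℕ → X := fun l => lst.getD l x0 with hg
  set C : ℕ → Set X :=
    fun l => Metric.ball (g l) (δ/6) \ ⋃ (l' : ℕ) (_ : l' < l), Metric.ball (g l') (δ/6) with hC
  have hmeasC : ∀ l, MeasurableSet (C l) := fun l =>
    measurableSet_ball.diff (MeasurableSet.biUnion (Set.to_countable _)
      fun l' _ => measurableSet_ball)
  have hCb : ∀ l, C l ⊆ Metric.ball (g l) (δ/6) := fun l => Set.diff_subset
  have hcell : ∀ x : X, ∃ l, l < K ∧ x ∈ C l := by
    intro x
    have hx : x ∈ ⋃ y ∈ s, Metric.ball y (δ/6) := hcov (Set.mem_univ x)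
    rw [Set.mem_iUnion₂] at hx
    obtain ⟨y, hy, hxy⟩ := hx
    have hylst : y ∈ lst := by
      rw [hlst, Finset.mem_toList, Set.Finite.mem_toFinset]
      exact hy
    obtain ⟨l0, hl0K, hl0⟩ := List.mem_iff_getElem.mp hylst
    have hP : ∃ l, l < K ∧ x ∈ Metric.ball (g l) (δ/6) := by
      refine ⟨l0, hl0K, ?_⟩
      rw [hg]
      simp only
      rw [List.getD_eq_getElem lst x0 hl0K, hl0]
      exact hxy
    refine ⟨Nat.find hP, (Nat.find_spec hP).1, (Nat.find_spec hP).2, ?_⟩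
    simp only [Set.mem_iUnion]
    rintro ⟨l', hl', hmem'⟩
    exact Nat.find_min hP hl' ⟨lt_trans hl' (Nat.find_spec hP).1, hmem'⟩
  have hdisj : ∀ {l l' : ℕ}, l ≠ l' → Disjoint (C l) (C l') := by
    have haux : ∀ {l l' : ℕ}, l < l' → Disjoint (C l) (C l') := by
      intro l l' h
      rw [Set.disjoint_left]
      intro z hzl hzl'
      have h2 : z ∉ ⋃ (l'' : ℕ) (_ : l'' < l'), Metric.ball (g l'') (δ/6) := hzl'.2
      simp only [Set.mem_iUnion] at h2
      exact h2 ⟨l, h, hCb l hzl⟩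
    intro l l' hne
    rcases lt_or_gt_of_ne hne with h | h
    · exact haux h
    · exact (haux h).symm
  set γ : ℝ := δ/(4*((K:ℝ)+1)) with hγdef
  have hγ : 0 < γ := by rw [hγdef]; positivity
  -- the approximation claim
  have claim : ∀ μ ν : ProbabilityMeasure X,
      (∀ l, l < K → |((μ (C l) : ℝ≥0) : ℝ) - ((ν (C l) : ℝ≥0) : ℝ)| ≤ γ) →
      prokhorov μ ν ≤ δ/2 := by
    intro μ ν hclose
    apply csInf_le ⟨0, fun z hz => hz.1.le⟩
    refine ⟨by linarith, fun A hA => ?_⟩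
    set meet : Finset ℕ := (Finset.range K).filter (fun l => (C l ∩ A).Nonempty) with hmeet
    have hsub1 : A ⊆ ⋃ l ∈ meet, C l := by
      intro x hx
      obtain ⟨l, hlK, hlx⟩ := hcell x
      refine Set.mem_iUnion₂.mpr ⟨l, ?_, hlx⟩
      exact Finset.mem_filter.mpr ⟨Finset.mem_range.mpr hlK, ⟨x, hlx, hx⟩⟩
    have hsub2 : (⋃ l ∈ meet, C l) ⊆ Metric.thickening (δ/2) A := by
      intro z hz
      rw [Set.mem_iUnion₂] at hz
      obtain ⟨l, hl, hzl⟩ := hz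
      obtain ⟨xa, hxaC, hxaA⟩ := (Finset.mem_filter.mp hl).2
      rw [Metric.mem_thickening_iff]
      refine ⟨xa, hxaA, ?_⟩
      have d1 : dist z (g l) < δ/6 := by
        have := hCb l hzl
        rwa [Metric.mem_ball] at this
      have d2 : dist xa (g l) < δ/6 := by
        have := hCb l hxaC
        rwa [Metric.mem_ball] at this
      calc dist z xa ≤ dist z (g l) + dist xa (g l) := dist_triangle_right _ _ _
        _ < δ/6 + δ/6 := add_lt_add d1 d2
        _ < δ/2 := by linarith
    -- pass to ENNReal computations
    have e1 : ((μ A : ℝ≥0) : ℝ) ≤ ∑ l ∈ meet, (((μ (C l)) : ℝ≥0) : ℝ) := by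
      have h1 : (μ : Measure X) A ≤ ∑ l ∈ meet, (μ : Measure X) (C l) :=
        le_trans (measure_mono hsub1) (measure_biUnion_finset_le _ _)
      have h2 : (∑ l ∈ meet, (μ : Measure X) (C l)) ≠ ⊤ :=
        (ENNReal.sum_lt_top.mpr fun l _ => measure_lt_top _ _).ne
      rw [pm_coe]
      calc ((μ : Measure X) A).toReal ≤ (∑ l ∈ meet, (μ : Measure X) (C l)).toReal :=
            ENNReal.toReal_mono h2 h1
        _ = ∑ l ∈ meet, ((μ : Measure X) (C l)).toReal := ENNReal.toReal_sum fun l _ =>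
            (measure_lt_top _ _).ne
        _ = ∑ l ∈ meet, (((μ (C l)) : ℝ≥0) : ℝ) := by
            exact Finset.sum_congr rfl fun l _ => (pm_coe μ (C l)).symm
    have e2 : (∑ l ∈ meet, (((ν (C l)) : ℝ≥0) : ℝ)) ≤ ((ν (Metric.thickening (δ/2) A) : ℝ≥0) : ℝ) := by
      have h1 : (∑ l ∈ meet, (ν : Measure X) (C l)) = (ν : Measure X) (⋃ l ∈ meet, C l) :=
        (measure_biUnion_finset (fun l _ l' _ hne => hdisj hne) fun l _ => hmeasC l).symm
      have h2 : (ν : Measure X) (⋃ l ∈ meet, C l) ≤ (ν : Measure X) (Metric.thickening (δ/2) A) :=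
        measure_mono hsub2
      rw [pm_coe]
      calc (∑ l ∈ meet, (((ν (C l)) : ℝ≥0) : ℝ))
          = ∑ l ∈ meet, ((ν : Measure X) (C l)).toReal := by
            exact Finset.sum_congr rfl fun l _ => pm_coe ν (C l)
        _ = (∑ l ∈ meet, (ν : Measure X) (C l)).toReal := (ENNReal.toReal_sum fun l _ =>
            (measure_lt_top _ _).ne).symm
        _ ≤ ((ν : Measure X) (Metric.thickening (δ/2) A)).toReal := by
            rw [h1]
            exact ENNReal.toReal_mono (measure_ne_top _ _) h2
    have e3 : ∑ l ∈ meet, (((μ (C l)) : ℝ≥0) : ℝ)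
        ≤ (∑ l ∈ meet, (((ν (C l)) : ℝ≥0) : ℝ)) + meet.card * γ := by
      have h1 : ∀ l ∈ meet, (((μ (C l)) : ℝ≥0) : ℝ) ≤ (((ν (C l)) : ℝ≥0) : ℝ) + γ := by
        intro l hl
        have hlK : l < K := Finset.mem_range.mp (Finset.mem_filter.mp hl).1
        have := hclose l hlK
        rw [abs_le] at this
        linarith [this.1, this.2]
      calc ∑ l ∈ meet, (((μ (C l)) : ℝ≥0) : ℝ)
          ≤ ∑ l ∈ meet, ((((ν (C l)) : ℝ≥0) : ℝ) + γ) := Finset.sum_le_sum h1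
        _ = (∑ l ∈ meet, (((ν (C l)) : ℝ≥0) : ℝ)) + meet.card * γ := by
            rw [Finset.sum_add_distrib, Finset.sum_const, nsmul_eq_mul]
    have e4 : (meet.card : ℝ) * γ ≤ δ/2 := by
      have h1 : meet.card ≤ K := by
        calc meet.card ≤ (Finset.range K).card := Finset.card_filter_le _ _
          _ = K := Finset.card_range K
      have h2 : (meet.card : ℝ) ≤ K := by exact_mod_cast h1
      have hK1 : (0:ℝ) < (K:ℝ)+1 := by positivity
      have h7 : γ * (meet.card:ℝ) ≤ γ * ((K:ℝ)+1) :=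
        mul_le_mul_of_nonneg_left (by linarith) hγ.le
      have h8 : γ * ((K:ℝ)+1) = δ/4 := by
        rw [hγdef]
        field_simp
      nlinarith
    linarith
  -- the fingerprint map
  set M : ℕ := ⌊1/γ⌋₊ with hM
  set ψ : ProbabilityMeasure X → (Fin n → Fin K → Fin (M+1)) := fun μ i l =>
    ⟨min M ⌊((((push T hT)^[i] μ) (C (l:ℕ)) : ℝ≥0) : ℝ) / γ⌋₊,
      Nat.lt_succ_of_le (min_le_left _ _)⟩ with hψ
  refine ⟨Fintype.card (Fin n → Fin K → Fin (M+1)), ?_⟩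
  rintro k ⟨F, rfl, hFsep⟩
  have hinj : Set.InjOn ψ ↑F := by
    intro μ hμ ν hν hψeq
    by_contra hne
    obtain ⟨i, hin, hsepi⟩ := hFsep μ hμ ν hν hne
    have hclose : ∀ l, l < K →
        |((((push T hT)^[i] μ) (C l) : ℝ≥0) : ℝ) - ((((push T hT)^[i] ν) (C l) : ℝ≥0) : ℝ)| ≤ γ := by
      intro l hl
      have heq := congrFun (congrFun hψeq ⟨i, hin⟩) ⟨l, hl⟩
      simp only [hψ, Fin.mk.injEq] at heq
      have hval : ∀ ρ : ProbabilityMeasure X, ⌊((ρ (C l) : ℝ≥0) : ℝ) / γ⌋₊ ≤ M := by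
        intro ρ
        rw [hM]
        have hx1 : ((ρ (C l) : ℝ≥0) : ℝ) ≤ 1 := by exact_mod_cast ρ.apply_le_one _
        exact Nat.floor_le_floor (by gcongr)
      rw [min_eq_right (hval _), min_eq_right (hval _)] at heq
      exact floor_close hγ (NNReal.coe_nonneg _) (NNReal.coe_nonneg _) heq
    have hle : prokhorov ((push T hT)^[i] μ) ((push T hT)^[i] ν) ≤ δ/2 := claim _ _ hclose
    linarith
  rw [← Finset.card_univ]
  exact Finset.card_le_card_of_injOn ψ (fun a _ => Finset.mem_univ (ψ a)) hinj


lemma prokhorov_self_le (μ : ProbabilityMeasure X) {η : ℝ} (hη : 0 < η) :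
    prokhorov μ μ ≤ η := by
  apply csInf_le ⟨0, fun z hz => hz.1.le⟩
  refine ⟨hη, fun A _ => ?_⟩
  have := pm_mono μ (Metric.self_subset_thickening hη A)
  linarith

lemma one_le_sep_push [CompactSpace X] [Nonempty X] (T : X → X) (hT : Continuous T)
    (n : ℕ) {δ : ℝ} (hδ : 0 < δ) : 1 ≤ sep prokhorov (push T hT) n δ := by
  apply le_csSup (bddAbove_sep_push T hT n hδ)
  refine ⟨{⟨Measure.dirac (Classical.arbitrary X), Measure.dirac.isProbabilityMeasure⟩},
    Finset.card_singleton _, ?_⟩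
  intro x hx y hy hxy
  exact absurd ((Finset.mem_singleton.mp (Finset.mem_coe.mp hx)).trans
    (Finset.mem_singleton.mp (Finset.mem_coe.mp hy)).symm) hxy

lemma sep_pow_le [CompactSpace X] [Nonempty X] (T : X → X) (hT : Continuous T)
    (n : ℕ) {m : ℕ} (hm : 0 < m) {ε : ℝ} (hε : 0 < ε) :
    (sep dist T n ε)^m ≤ sep prokhorov (push T hT) n (del0 m ε) := by
  classical
  by_cases hbdd : BddAbove {k | ∃ A : Finset X, A.card = k ∧ IsSep dist T n ε ↑A}
  case neg =>
    have hinf : {k | ∃ A : Finset X, A.card = k ∧ IsSep dist T n ε ↑A}.Infinite := by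
      by_contra hfin
      exact hbdd ((Set.not_infinite.mp hfin).bddAbove)
    have h0 : sep dist T n ε = 0 := by
      show sSup {k | ∃ A : Finset X, A.card = k ∧ IsSep dist T n ε ↑A} = 0
      exact Set.Infinite.Nat.sSup_eq_zero hinf
    rw [h0, Nat.zero_pow hm]
    exact Nat.zero_le _
  case pos =>
    have hne : {k | ∃ A : Finset X, A.card = k ∧ IsSep dist T n ε ↑A}.Nonempty := by
      refine ⟨0, ∅, Finset.card_empty, ?_⟩
      intro x hx
      simp at hx
    have hmem : sep dist T n ε ∈ {k | ∃ A : Finset X, A.card = k ∧ IsSep dist T n ε ↑A} :=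
      Nat.sSup_mem hne hbdd
    obtain ⟨A, hcard, hsepA⟩ := hmem
    set F : Finset (ProbabilityMeasure X) :=
      (Fintype.piFinset (fun _ : Fin m => A)).image (fun u => atomPM m hm u) with hF
    have hinj : Set.InjOn (fun u => atomPM m hm u)
        (↑(Fintype.piFinset (fun _ : Fin m => A)) : Set (Fin m → X)) := by
      intro u hu v hv heq
      by_contra hne2
      obtain ⟨i, _, hd⟩ := key_sep T hT hm hε hsepA
        (fun j => Fintype.mem_piFinset.mp hu j) (fun j => Fintype.mem_piFinset.mp hv j) hne2
      simp only at heq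
      rw [heq] at hd
      have h2 : prokhorov ((push T hT)^[i] (atomPM m hm v))
          ((push T hT)^[i] (atomPM m hm v)) ≤ del0 m ε / 2 :=
        prokhorov_self_le _ (half_pos (del0_pos hε))
      have h3 := del0_pos (m := m) hε
      linarith
    have hFcard : F.card = (sep dist T n ε)^m := by
      rw [hF, Finset.card_image_of_injOn hinj, Fintype.card_piFinset_const, hcard]
    apply le_csSup (bddAbove_sep_push T hT n (del0_pos hε))
    refine ⟨F, hFcard, ?_⟩
    intro x hx y hy hxy
    obtain ⟨u, hu, rfl⟩ := Finset.mem_image.mp (Finset.mem_coe.mp hx)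
    obtain ⟨v, hv, rfl⟩ := Finset.mem_image.mp (Finset.mem_coe.mp hy)
    have hne2 : u ≠ v := fun h => hxy (by rw [h])
    exact key_sep T hT hm hε hsepA (fun j => Fintype.mem_piFinset.mp hu j)
      (fun j => Fintype.mem_piFinset.mp hv j) hne2

end PaperProof

open Paper in
/-- If `o(T) ≥ [a(n)]` (every nondecreasing sequence dominating all the
sequences `n ↦ Sep(T,n,ε)` dominates `a`), then `o(T_*) ≥ sup {[a(n)^t] : t > 0}` (every
nondecreasing sequence dominating all the sequences `n ↦ Sep(T_*,n,ε)`, separated sets taken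
w.r.t. the Lévy–Prokhorov metric, dominates `a^t` for every `t > 0`). -/
theorem pushforward_generalized_entropy_ge_sup_powers
    {X : Type*} [MetricSpace X] [CompactSpace X] [MeasurableSpace X] [BorelSpace X]
    (T : X → X) (hT : Continuous T)
    (a : ℕ → ℝ) (ha : ∀ n, 0 < a n) (hamono : Monotone a)
    (hoT : ∀ c : ℕ → ℝ, (∀ n, 0 ≤ c n) → Monotone c →
      (∀ ε > (0 : ℝ), ∃ C > (0 : ℝ), ∀ n : ℕ, (sep dist T n ε : ℝ) ≤ C * c n) →
      ∃ C' > (0 : ℝ), ∀ n : ℕ, a n ≤ C' * c n) :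
    ∀ c : ℕ → ℝ, (∀ n, 0 ≤ c n) → Monotone c →
      (∀ ε > (0 : ℝ), ∃ C > (0 : ℝ), ∀ n : ℕ,
        (sep prokhorov (push T hT) n ε : ℝ) ≤ C * c n) →
      ∀ t > (0 : ℝ), ∃ C' > (0 : ℝ), ∀ n : ℕ, a n ^ t ≤ C' * c n := by
  intro c hc0 hcmono hsepc t ht
  rcases isEmpty_or_nonempty X with hX | hX
  · -- degenerate case : X is empty, and the hypothesis on T is contradictory
    exfalso
    have hprem : ∀ ε > (0:ℝ), ∃ C > (0:ℝ), ∀ n : ℕ,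
        (sep dist T n ε : ℝ) ≤ C * (fun _ : ℕ => (0:ℝ)) n := by
      intro ε hε
      refine ⟨1, one_pos, fun n => ?_⟩
      have hsep0 : sep dist T n ε = 0 := by
        have hset : {k | ∃ A : Finset X, A.card = k ∧ IsSep dist T n ε ↑A} = {0} := by
          ext k
          simp only [Set.mem_setOf_eq, Set.mem_singleton_iff]
          constructor
          · rintro ⟨A, rfl, -⟩
            rw [Finset.eq_empty_of_isEmpty A]
            exact Finset.card_empty
          · rintro rfl
            refine ⟨∅, Finset.card_empty, ?_⟩
            intro x hx
            simp at hx
        show sSup {k | ∃ A : Finset X, A.card = k ∧ IsSep dist T n ε ↑A} = 0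
        rw [hset]
        exact csSup_singleton 0
      simp [hsep0]
    obtain ⟨C', _, hbound⟩ := hoT (fun _ => 0) (fun _ => le_refl 0) monotone_const hprem
    have h1 := hbound 0
    simp only [mul_zero] at h1
    linarith [ha 0]
  · -- main case
    set m : ℕ := ⌈t⌉₊ with hmdef
    have hm0 : 0 < m := Nat.ceil_pos.mpr ht
    have htm : t ≤ (m:ℝ) := Nat.le_ceil t
    obtain ⟨C2, hC2pos, hC2⟩ := hsepc 2 (by norm_num)
    have hc_lb : ∀ n, 1 ≤ C2 * c n := by
      intro n
      have h1 : (1:ℝ) ≤ ((sep prokhorov (push T hT) n 2 : ℕ) : ℝ) := by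
        exact_mod_cast PaperProof.one_le_sep_push T hT n (by norm_num : (0:ℝ) < 2)
      linarith [hC2 n]
    set c' : ℕ → ℝ := fun n => (c n) ^ (1/(m:ℝ)) with hc'def
    have hc'0 : ∀ n, 0 ≤ c' n := fun n => Real.rpow_nonneg (hc0 n) _
    have hc'mono : Monotone c' := fun i j hij =>
      Real.rpow_le_rpow (hc0 i) (hcmono hij) (by positivity)
    have hc'dom : ∀ ε > (0:ℝ), ∃ C > (0:ℝ), ∀ n : ℕ, (sep dist T n ε : ℝ) ≤ C * c' n := by
      intro ε hε
      obtain ⟨C, hCpos, hC⟩ := hsepc (PaperProof.del0 m ε) (PaperProof.del0_pos hε)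
      refine ⟨C ^ (1/(m:ℝ)), Real.rpow_pos_of_pos hCpos _, fun n => ?_⟩
      have h1 : ((sep dist T n ε : ℕ) : ℝ)^(m:ℕ) ≤ C * c n := by
        calc ((sep dist T n ε : ℕ) : ℝ)^(m:ℕ) = (((sep dist T n ε)^m : ℕ) : ℝ) := by push_cast; ring
          _ ≤ ((sep prokhorov (push T hT) n (PaperProof.del0 m ε) : ℕ) : ℝ) := by
              exact_mod_cast PaperProof.sep_pow_le T hT n hm0 hε
          _ ≤ C * c n := hC n
      have hk0 : (0:ℝ) ≤ ((sep dist T n ε : ℕ) : ℝ) := Nat.cast_nonneg _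
      have hmne : ((m:ℕ):ℝ) ≠ 0 := by exact_mod_cast hm0.ne'
      have h2 : ((sep dist T n ε : ℕ):ℝ) = (((sep dist T n ε : ℕ):ℝ)^(m:ℕ)) ^ (1/(m:ℝ)) := by
        rw [← Real.rpow_natCast ((sep dist T n ε : ℕ):ℝ) m, ← Real.rpow_mul hk0,
          mul_one_div, div_self hmne, Real.rpow_one]
      rw [h2]
      calc (((sep dist T n ε : ℕ):ℝ)^(m:ℕ)) ^ (1/(m:ℝ)) ≤ (C * c n) ^ (1/(m:ℝ)) :=
            Real.rpow_le_rpow (by positivity) h1 (by positivity)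
        _ = C ^ (1/(m:ℝ)) * (c n) ^ (1/(m:ℝ)) := Real.mul_rpow hCpos.le (hc0 n)
    obtain ⟨C', hC'pos, hC'⟩ := hoT c' hc'0 hc'mono hc'dom
    refine ⟨C' ^ (m:ℝ) + C2, by positivity, fun n => ?_⟩
    have hmne : ((m:ℕ):ℝ) ≠ 0 := by exact_mod_cast hm0.ne'
    have hpowm : a n ^ (m:ℝ) ≤ C' ^ (m:ℝ) * c n := by
      calc a n ^ (m:ℝ) ≤ (C' * c' n) ^ (m:ℝ) :=
            Real.rpow_le_rpow (ha n).le (hC' n) (by positivity)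
        _ = C' ^ (m:ℝ) * (c' n) ^ (m:ℝ) := Real.mul_rpow hC'pos.le (hc'0 n)
        _ = C' ^ (m:ℝ) * c n := by
            rw [hc'def]
            simp only
            rw [← Real.rpow_mul (hc0 n), one_div_mul_cancel hmne, Real.rpow_one]
    have hc2n := hc_lb n
    rcases le_or_gt (a n) 1 with hle | hgt
    · have h1 : a n ^ t ≤ 1 := Real.rpow_le_one (ha n).le hle ht.le
      have h2 : 0 ≤ C' ^ (m:ℝ) * c n := mul_nonneg (Real.rpow_nonneg hC'pos.le _) (hc0 n)
      rw [add_mul]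
      linarith
    · have h1 : a n ^ t ≤ a n ^ (m:ℝ) := Real.rpow_le_rpow_of_exponent_le hgt.le htm
      rw [add_mul]
      linarith
end

section
/- Let Σ₂ = {0,1}^ℤ with the shift map σ and the metric d(x,y) = 2^{−min{|k| : x_k ≠ y_k}} for x ≠ y. Let p ∈ Σ₂ be the point with p_0 = 1 and p_k = 0 for all k ≠ 0, and let S be the closure of the σ-orbit {σ^n p : n ∈ ℤ} in Σ₂ (a compact σ-invariant set). Then the induced hyperspace map σ_K of the restriction σ|_S, acting on the hyperspace (K(S), d_H) of nonempty closed subsets of S, has topological entropy h(σ_K) = log 2. Moreover, its generalized entropy is o(σ_K) = [2^n] = [e^{(log 2)·n}]. -/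
open Metric Filter TopologicalSpace MeasureTheory Set

namespace Paper

/-- Minimal `(n,ε)`-spanning cardinality for the iterates of `S` restricted to a subset `B`,
w.r.t. the distance function `D`. -/
noncomputable def spanIn {α : Type*} (D : α → α → ℝ) (S : α → α) (B : Set α)
    (n : ℕ) (ε : ℝ) : ℕ :=
  sInf {k | ∃ E : Finset α, ↑E ⊆ B ∧ E.card = k ∧
    ∀ x ∈ B, ∃ y ∈ E, ∀ i < n, D (S^[i] x) (S^[i] y) < ε}

end Paper


namespace SubshiftPf

open Metric Set Filter

noncomputable section

/-- orbit point with the unique `1` at coordinate `-n` -/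
def q (n : ℤ) : ℤ → Bool := fun k => decide (k = -n)

/-- the zero point -/
def z : ℤ → Bool := fun _ => false

def S' : Set (ℤ → Bool) := Set.range q ∪ {z}

/-- the hyperspace of nonempty closed subsets of `S'` (product topology) -/
def B' : Set (Set (ℤ → Bool)) := {A | A.Nonempty ∧ IsClosed A ∧ A ⊆ S'}

lemma q_ne_z (n : ℤ) : q n ≠ z := by
  intro h
  have := congrFun h (-n)
  simp [q, z] at this

lemma q_inj : Function.Injective q := by
  intro a b h
  have := congrFun h (-a)
  simp [q] at this
  omega

/-- the shift -/
def σ₀ : (ℤ → Bool) → (ℤ → Bool) := fun x k => x (k + 1)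

lemma sigma_z : σ₀ z = z := rfl

lemma sigma_q (n : ℤ) : σ₀ (q n) = q (n + 1) := by
  funext k
  simp only [σ₀, q]
  exact decide_eq_decide.mpr (by omega)

lemma sigma_iter_z (i : ℕ) : σ₀^[i] z = z := Function.iterate_fixed sigma_z i

lemma sigma_iter_q (i : ℕ) (n : ℤ) : σ₀^[i] (q n) = q (n + i) := by
  induction i with
  | zero => simp
  | succ i ih =>
    rw [Function.iterate_succ_apply', ih, sigma_q]
    push_cast
    ring_nf

lemma sigma_iter_mem_S' (i : ℕ) {x : ℤ → Bool} (hx : x ∈ S') : σ₀^[i] x ∈ S' := by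
  rcases hx with ⟨n, rfl⟩ | hx
  · exact Or.inl ⟨n + i, (sigma_iter_q i n).symm⟩
  · simp only [mem_singleton_iff] at hx
    subst hx
    exact Or.inr (by simp [sigma_iter_z])

lemma finite_mem_B' {A : Set (ℤ → Bool)} (hfin : A.Finite) (hne : A.Nonempty)
    (hsub : A ⊆ S') : A ∈ B' :=
  ⟨hne, hfin.isClosed, hsub⟩

lemma isClosed_S' : IsClosed S' := by
  rw [← isOpen_compl_iff, isOpen_iff_mem_nhds]
  intro x hx
  simp only [mem_compl_iff, S', mem_union, mem_range, mem_singleton_iff, not_or, not_exists] at hx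
  obtain ⟨hxq, hxz⟩ := hx
  have hxz' : ∃ k₀ : ℤ, x k₀ = true := by
    by_contra h
    push_neg at h
    exact hxz (funext fun k => by simpa [z] using h k)
  obtain ⟨k₀, hk₀⟩ := hxz'
  have hxq' : ∃ k₁ : ℤ, x k₁ ≠ q (-k₀) k₁ := Function.ne_iff.mp (fun h => hxq _ h.symm)
  obtain ⟨k₁, hk₁⟩ := hxq'
  have hU : IsOpen ((fun y : ℤ → Bool => y k₀) ⁻¹' {true} ∩ (fun y : ℤ → Bool => y k₁) ⁻¹' {x k₁}) :=
    ((continuous_apply k₀).isOpen_preimage _ (isOpen_discrete _)).inter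
      ((continuous_apply k₁).isOpen_preimage _ (isOpen_discrete _))
  apply Filter.mem_of_superset (hU.mem_nhds ⟨by simpa using hk₀, rfl⟩)
  rintro y ⟨hy₀, hy₁⟩
  simp only [mem_preimage, mem_singleton_iff] at hy₀ hy₁
  simp only [mem_compl_iff, S', mem_union, mem_range, mem_singleton_iff, not_or, not_exists]
  constructor
  · rintro n rfl
    have hn : n = -k₀ := by
      simp only [q, decide_eq_true_eq] at hy₀
      omega
    subst hn
    exact hk₁ hy₁.symm
  · rintro rfl
    simp [z] at hy₀

lemma z_mem_closure : z ∈ closure (Set.range q) := by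
  have ht : Filter.Tendsto (fun N : ℕ => q N) atTop (nhds z) := by
    rw [tendsto_pi_nhds]
    intro k
    have hn : nhds (z k) = pure (z k) := by rw [nhds_discrete]
    rw [hn, Filter.tendsto_pure]
    filter_upwards [Filter.eventually_ge_atTop (k.natAbs + 1)] with N hN
    simp only [q, z, decide_eq_false_iff_not]
    omega
  exact mem_closure_of_tendsto ht (by filter_upwards with N using ⟨(N : ℤ), rfl⟩)

lemma closure_orbit : closure (Set.range q) = S' := by
  apply subset_antisymm
  · exact closure_minimal subset_union_left isClosed_S'
  · rintro y (hy | hyz)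
    · exact subset_closure hy
    · simp only [mem_singleton_iff] at hyz
      subst hyz
      exact z_mem_closure

lemma orbit_eq :
    {y : ℤ → Bool | ∃ n : ℤ, y = fun k => (fun j => decide (j = (0:ℤ))) (k + n)} = Set.range q := by
  ext y
  simp only [mem_setOf_eq, mem_range]
  constructor
  · rintro ⟨n, rfl⟩
    exact ⟨n, funext fun k => decide_eq_decide.mpr (by omega)⟩
  · rintro ⟨n, rfl⟩
    exact ⟨n, funext fun k => decide_eq_decide.mpr (by omega)⟩

section Metric

variable [MetricSpace (ℤ → Bool)]
  (hd : ∀ x y : ℤ → Bool, x ≠ y →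
    dist x y = (2 : ℝ) ^ (-((sInf {m : ℕ | ∃ k : ℤ, k.natAbs = m ∧ x k ≠ y k} : ℕ) : ℤ)))

include hd

lemma dist_le_one (x y : ℤ → Bool) : dist x y ≤ 1 := by
  rcases eq_or_ne x y with rfl | h
  · simp
  · rw [hd x y h]
    calc (2:ℝ) ^ (-((sInf {m : ℕ | ∃ k : ℤ, k.natAbs = m ∧ x k ≠ y k} : ℕ) : ℤ))
        ≤ (2:ℝ) ^ (0 : ℤ) := zpow_le_zpow_right₀ one_le_two (by omega)
      _ = 1 := zpow_zero 2

lemma dist_q_z (n : ℤ) : dist (q n) z = (2 : ℝ) ^ (-(n.natAbs : ℤ)) := by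
  rw [hd _ _ (q_ne_z n)]
  congr 2
  have h : {m : ℕ | ∃ k : ℤ, k.natAbs = m ∧ q n k ≠ z k} = {n.natAbs} := by
    ext m
    simp only [mem_setOf_eq, mem_singleton_iff]
    constructor
    · rintro ⟨k, rfl, hk⟩
      simp only [q, z] at hk
      have : k = -n := by
        by_contra h
        simp [h] at hk
      subst this
      simp
    · rintro rfl
      exact ⟨-n, by simp, by simp [q, z]⟩
  rw [h, csInf_singleton]

lemma dist_ge_of_diff {x y : ℤ → Bool} {D : ℤ} (h : x D ≠ y D) :
    (2 : ℝ) ^ (-(D.natAbs : ℤ)) ≤ dist x y := by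
  have hxy : x ≠ y := fun he => h (congrFun he D)
  rw [hd x y hxy]
  apply zpow_le_zpow_right₀ one_le_two
  have : sInf {m : ℕ | ∃ k : ℤ, k.natAbs = m ∧ x k ≠ y k} ≤ D.natAbs :=
    Nat.sInf_le ⟨D, rfl, h⟩
  omega

lemma one_le_dist_q_zero {y : ℤ → Bool} (hy : y ∈ S') (hne : y ≠ q 0) :
    1 ≤ dist (q 0) y := by
  have h0 : q 0 (0 : ℤ) = true := by simp [q]
  have hy0 : y 0 = false := by
    rcases hy with ⟨l, rfl⟩ | hy
    · have hl : l ≠ 0 := fun h => hne (by rw [h])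
      simp [q]
      omega
    · simp only [mem_singleton_iff] at hy; subst hy; rfl
  have := dist_ge_of_diff hd (D := 0) (x := q 0) (y := y) (by rw [h0, hy0]; simp)
  simpa using this

lemma isBounded_all (s : Set (ℤ → Bool)) : Bornology.IsBounded s :=
  Metric.isBounded_iff.mpr ⟨1, fun _x _ _y _ => dist_le_one hd _ _⟩

lemma hEdist_ne_top {A A' : Set (ℤ → Bool)} (hA : A.Nonempty) (hA' : A'.Nonempty) :
    EMetric.hausdorffEdist A A' ≠ ⊤ :=
  Metric.hausdorffEdist_ne_top_of_nonempty_of_bounded hA hA' (isBounded_all hd A)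
    (isBounded_all hd A')

/-- Upper bound: an explicit `(n,ε)`-spanning family of cardinality `≤ C·2^n`. -/
lemma span_upper {ε : ℝ} (hε : 0 < ε) :
    ∃ C : ℕ, 0 < C ∧ ∀ n : ℕ,
      ∃ E : Finset (Set (ℤ → Bool)), ↑E ⊆ B' ∧ E.card ≤ C * 2 ^ n ∧
        ∀ A ∈ B', ∃ Y ∈ E, ∀ i < n,
          hausdorffDist (σ₀^[i] '' A) (σ₀^[i] '' Y) < ε := by
  classical
  obtain ⟨m, hm⟩ := exists_pow_lt_of_lt_one hε (by norm_num : (1/2 : ℝ) < 1)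
  have h2 : ((1/2 : ℝ)) ^ m = (2:ℝ) ^ (-(m:ℤ)) := by
    rw [one_div, inv_pow, ← zpow_natCast, ← zpow_neg]
  set r : ℝ := (2:ℝ) ^ (-((m:ℤ)+1)) with hrdef
  have hr0 : 0 < r := by positivity
  have hrε : r < ε := by
    have : r ≤ (2:ℝ) ^ (-(m:ℤ)) := zpow_le_zpow_right₀ one_le_two (by omega)
    rw [← h2] at this
    exact lt_of_le_of_lt this hm
  refine ⟨2 ^ (2*m+1), by positivity, fun n => ?_⟩
  set W : Finset ℤ := Finset.Icc (-(m:ℤ) - n + 1) (m:ℤ) with hW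
  have hWcard : W.card = 2*m + n := by
    rw [hW, Int.card_Icc]
    omega
  set f : Finset ℤ × Bool → Set (ℤ → Bool) :=
    fun Tb => (q '' ↑Tb.1) ∪ (if Tb.2 then {z} else ∅) with hf
  set E : Finset (Set (ℤ → Bool)) :=
    ((W.powerset ×ˢ (Finset.univ : Finset Bool)).image f).filter (· ∈ B') with hE
  have hEB : ↑E ⊆ B' := by
    intro A hA
    simp only [hE, Finset.coe_filter, mem_setOf_eq] at hA
    exact hA.2
  have hcard : E.card ≤ 2 ^ (2*m+1) * 2 ^ n := by
    calc E.card ≤ ((W.powerset ×ˢ (Finset.univ : Finset Bool)).image f).card :=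
          Finset.card_filter_le _ _
      _ ≤ (W.powerset ×ˢ (Finset.univ : Finset Bool)).card := Finset.card_image_le
      _ = 2 ^ (2*m+n) * 2 := by
          rw [Finset.card_product, Finset.card_powerset, hWcard, Finset.card_univ]
          simp
      _ = 2 ^ (2*m+1) * 2 ^ n := by
          rw [← pow_succ, show 2*m+n+1 = (2*m+1)+n by omega, pow_add]
  refine ⟨E, hEB, hcard, fun A hA => ?_⟩
  obtain ⟨hAne, hAcl, hAsub⟩ := hA
  set T : Finset ℤ := W.filter (fun j => q j ∈ A) with hT
  set b : Bool := decide (z ∈ A ∨ ∃ j : ℤ, q j ∈ A ∧ j ∉ W) with hb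
  set Y : Set (ℤ → Bool) := f (T, b) with hY
  have hqT : ∀ j ∈ T, q j ∈ A := fun j hj => (Finset.mem_filter.mp hj).2
  have hbT : b = true ↔ (z ∈ A ∨ ∃ j : ℤ, q j ∈ A ∧ j ∉ W) := by
    rw [hb]
    simp only [decide_eq_true_eq]
  have hzY : b = true → z ∈ Y := by
    intro h
    rw [hY, hf]
    exact Or.inr (by simp [h])
  have hYfin : Y.Finite := by
    rw [hY]
    simp only [hf]
    apply Set.Finite.union (T.finite_toSet.image q)
    split <;> simp
  have hYB' : Y ∈ B' := by
    apply finite_mem_B' hYfin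
    · obtain ⟨x, hx⟩ := hAne
      rcases hAsub hx with ⟨j, rfl⟩ | hxz
      · by_cases hjW : j ∈ W
        · exact ⟨q j, Or.inl (mem_image_of_mem q (by simp [hT, Finset.mem_filter, hjW, hx]))⟩
        · exact ⟨z, hzY (hbT.mpr (Or.inr ⟨j, hx, hjW⟩))⟩
      · simp only [mem_singleton_iff] at hxz
        subst hxz
        exact ⟨z, hzY (hbT.mpr (Or.inl hx))⟩
    · rintro y (⟨j, _, rfl⟩ | hy)
      · exact Or.inl ⟨j, rfl⟩
      · rcases b with _ | _
        · simp at hy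
        · simp only [if_true] at hy
          exact Or.inr hy
  have hYE : Y ∈ E := by
    rw [hE]
    refine Finset.mem_filter.mpr ⟨Finset.mem_image.mpr ⟨(T, b), ?_, rfl⟩, hYB'⟩
    exact Finset.mem_product.mpr ⟨Finset.mem_powerset.mpr (Finset.filter_subset _ _),
      Finset.mem_univ _⟩
  refine ⟨Y, hYE, fun i hi => ?_⟩
  have hfar : ∀ j : ℤ, j ∉ W → dist (q (j + i)) z ≤ r := by
    intro j hjW
    rw [dist_q_z hd, hrdef]
    apply zpow_le_zpow_right₀ one_le_two
    simp only [hW, Finset.mem_Icc, not_and_or, not_le] at hjW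
    omega
  have hmain : hausdorffDist (σ₀^[i] '' A) (σ₀^[i] '' Y) ≤ r := by
    apply hausdorffDist_le_of_mem_dist hr0.le
    · rintro x ⟨u, hu, rfl⟩
      rcases hAsub hu with ⟨j, rfl⟩ | huz
      · by_cases hjW : j ∈ W
        · refine ⟨σ₀^[i] (q j), mem_image_of_mem _ ?_, by simp [hr0.le]⟩
          exact Or.inl (mem_image_of_mem q (by simp [hT, Finset.mem_filter, hjW, hu]))
        · refine ⟨σ₀^[i] z, mem_image_of_mem _ (hzY (hbT.mpr (Or.inr ⟨j, hu, hjW⟩))), ?_⟩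
          rw [sigma_iter_q, sigma_iter_z]
          exact hfar j hjW
      · simp only [mem_singleton_iff] at huz
        subst huz
        exact ⟨σ₀^[i] z, mem_image_of_mem _ (hzY (hbT.mpr (Or.inl hu))), by simp [hr0.le]⟩
    · rintro y ⟨w, hw, rfl⟩
      rcases hw with ⟨j, hjT, rfl⟩ | hwz
      · exact ⟨σ₀^[i] (q j), mem_image_of_mem _ (hqT j hjT), by simp [hr0.le]⟩
      · have hb' : b = true ∧ w = z := by
          rcases b with _ | _
          · simp at hwz
          · simp only [if_true, mem_singleton_iff] at hwz
            exact ⟨rfl, hwz⟩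
        obtain ⟨hbt, rfl⟩ := hb'
        rcases hbT.mp hbt with hzA | ⟨j, hjA, hjW⟩
        · exact ⟨σ₀^[i] z, mem_image_of_mem _ hzA, by simp [hr0.le]⟩
        · refine ⟨σ₀^[i] (q j), mem_image_of_mem _ hjA, ?_⟩
          rw [sigma_iter_q, sigma_iter_z, dist_comm]
          exact hfar j hjW
  exact lt_of_le_of_lt hmain hrε

/-- Lower bound: any `(n,ε)`-spanning family with `ε ≤ 1/2` has cardinality `≥ 2^n`. -/
lemma span_lower {ε : ℝ} (hε2 : ε ≤ 1/2) (n : ℕ)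
    {E : Finset (Set (ℤ → Bool))} (hEB : ↑E ⊆ B')
    (hsp : ∀ A ∈ B', ∃ Y ∈ E, ∀ i < n, hausdorffDist (σ₀^[i] '' A) (σ₀^[i] '' Y) < ε) :
    2 ^ n ≤ E.card := by
  classical
  set Aw : (Fin n → Bool) → Set (ℤ → Bool) :=
    fun w => insert z ((fun i : Fin n => q (-(i:ℤ))) '' {i | w i = true}) with hAw
  have hAwB' : ∀ w, Aw w ∈ B' := by
    intro w
    apply finite_mem_B'
    · exact ((Set.toFinite _).image _).insert z
    · exact ⟨z, mem_insert _ _⟩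
    · rintro x (rfl | ⟨i, _, rfl⟩)
      · exact Or.inr rfl
      · exact Or.inl ⟨_, rfl⟩
  have hmem : ∀ (w : Fin n → Bool) (i : ℕ) (hi : i < n),
      q 0 ∈ σ₀^[i] '' Aw w ↔ w ⟨i, hi⟩ = true := by
    intro w i hi
    constructor
    · rintro ⟨u, (rfl | ⟨i', hi', rfl⟩), hequ⟩
      · rw [sigma_iter_z] at hequ
        exact absurd hequ.symm (q_ne_z 0)
      · rw [sigma_iter_q] at hequ
        have hq := q_inj hequ
        have hii : i' = ⟨i, hi⟩ := by
          apply Fin.ext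
          have hlt := Fin.is_lt i'
          show (i' : ℕ) = i
          omega
        rwa [← hii]
    · intro hw
      refine ⟨q (-(⟨i, hi⟩ : Fin n) : ℤ), mem_insert_of_mem _ (mem_image_of_mem _ hw), ?_⟩
      rw [sigma_iter_q]
      norm_num
  have himg_sub : ∀ (w : Fin n → Bool) (i : ℕ), σ₀^[i] '' Aw w ⊆ S' := by
    rintro w i x ⟨u, hu, rfl⟩
    exact sigma_iter_mem_S' i ((hAwB' w).2.2 hu)
  have himg_ne : ∀ (w : Fin n → Bool) (i : ℕ), (σ₀^[i] '' Aw w).Nonempty :=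
    fun w i => (hAwB' w).1.image _
  have hsep : ∀ w w' : Fin n → Bool, w ≠ w' →
      ∃ i < n, 1 ≤ hausdorffDist (σ₀^[i] '' Aw w) (σ₀^[i] '' Aw w') := by
    have key : ∀ w w' : Fin n → Bool, ∀ i : Fin n, w i = true → w' i = false →
        1 ≤ hausdorffDist (σ₀^[i] '' Aw w) (σ₀^[i] '' Aw w') := by
      intro w w' i hwi hw'i
      have hq0s : q 0 ∈ σ₀^[(i:ℕ)] '' Aw w := (hmem w i i.is_lt).mpr (by simpa using hwi)
      have hq0t : q 0 ∉ σ₀^[(i:ℕ)] '' Aw w' := by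
        rw [hmem w' i i.is_lt]
        simp [hw'i]
      have hinf : 1 ≤ infDist (q 0) (σ₀^[(i:ℕ)] '' Aw w') := by
        by_contra h
        push_neg at h
        obtain ⟨y, hyt, hlt⟩ := (infDist_lt_iff (himg_ne w' i)).mp h
        have : 1 ≤ dist (q 0) y :=
          one_le_dist_q_zero hd (himg_sub w' i hyt) (fun he => hq0t (he ▸ hyt))
        linarith
      calc (1:ℝ) ≤ infDist (q 0) (σ₀^[(i:ℕ)] '' Aw w') := hinf
        _ ≤ hausdorffDist (σ₀^[(i:ℕ)] '' Aw w) (σ₀^[(i:ℕ)] '' Aw w') :=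
            infDist_le_hausdorffDist_of_mem hq0s (hEdist_ne_top hd (himg_ne w i) (himg_ne w' i))
    intro w w' hne
    obtain ⟨i, hi⟩ := Function.ne_iff.mp hne
    rcases hwi : w i with _ | _
    · have hw'i : w' i = true := by
        revert hi; rw [hwi]; cases w' i <;> simp
      exact ⟨i, i.is_lt, by rw [hausdorffDist_comm]; exact key w' w i hw'i hwi⟩
    · have hw'i : w' i = false := by
        revert hi; rw [hwi]; cases w' i <;> simp
      exact ⟨i, i.is_lt, key w w' i hwi hw'i⟩
  choose Y hYE hY using fun w => hsp (Aw w) (hAwB' w)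
  have hYne : ∀ w i, (σ₀^[i] '' Y w).Nonempty := by
    intro w i
    exact ((hEB (hYE w)).1).image _
  have hinj : Function.Injective Y := by
    intro w w' heq
    by_contra hne
    obtain ⟨i, hi, h1⟩ := hsep w w' hne
    have t1 : hausdorffDist (σ₀^[i] '' Aw w) (σ₀^[i] '' Y w) < ε := hY w i hi
    have t2 : hausdorffDist (σ₀^[i] '' Aw w') (σ₀^[i] '' Y w') < ε := hY w' i hi
    have tri : hausdorffDist (σ₀^[i] '' Aw w) (σ₀^[i] '' Aw w') ≤
        hausdorffDist (σ₀^[i] '' Aw w) (σ₀^[i] '' Y w) +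
        hausdorffDist (σ₀^[i] '' Y w) (σ₀^[i] '' Aw w') :=
      hausdorffDist_triangle (hEdist_ne_top hd (himg_ne w i) (hYne w i))
    have t2' : hausdorffDist (σ₀^[i] '' Y w) (σ₀^[i] '' Aw w') < ε := by
      rw [heq, hausdorffDist_comm]
      exact t2
    linarith
  have hcard : Fintype.card (Fin n → Bool) ≤ E.card := by
    rw [← Fintype.card_coe E]
    exact Fintype.card_le_of_injective (fun w => ⟨Y w, hYE w⟩)
      (fun w w' h => hinj (Subtype.mk_eq_mk.mp h))
  simpa using hcard

/-- Upper bound for `spanIn`. -/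
lemma spanIn_upper {ε : ℝ} (hε : 0 < ε) :
    ∃ C : ℕ, 0 < C ∧ ∀ n : ℕ,
      Paper.spanIn Metric.hausdorffDist (Set.image σ₀) B' n ε ≤ C * 2 ^ n := by
  obtain ⟨C, hC, hspan⟩ := span_upper hd hε
  refine ⟨C, hC, fun n => ?_⟩
  obtain ⟨E, hEB, hcard, hsp⟩ := hspan n
  have hmem : E.card ∈ {k | ∃ E' : Finset (Set (ℤ → Bool)), ↑E' ⊆ B' ∧ E'.card = k ∧
      ∀ x ∈ B', ∃ y ∈ E', ∀ i < n,
        hausdorffDist ((Set.image σ₀)^[i] x) ((Set.image σ₀)^[i] y) < ε} := by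
    refine ⟨E, hEB, rfl, fun A hA => ?_⟩
    obtain ⟨Y, hYE, hY⟩ := hsp A hA
    exact ⟨Y, hYE, fun i hi => by rw [← Set.image_iterate_eq]; exact hY i hi⟩
  exact le_trans (Nat.sInf_le hmem) hcard

/-- Lower bound for `spanIn`. -/
lemma spanIn_lower {ε : ℝ} (hε : 0 < ε) (hε2 : ε ≤ 1/2) (n : ℕ) :
    2 ^ n ≤ Paper.spanIn Metric.hausdorffDist (Set.image σ₀) B' n ε := by
  have hne : {k | ∃ E' : Finset (Set (ℤ → Bool)), ↑E' ⊆ B' ∧ E'.card = k ∧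
      ∀ x ∈ B', ∃ y ∈ E', ∀ i < n,
        hausdorffDist ((Set.image σ₀)^[i] x) ((Set.image σ₀)^[i] y) < ε}.Nonempty := by
    obtain ⟨C, hC, hspan⟩ := span_upper hd hε
    obtain ⟨E, hEB, hcard, hsp⟩ := hspan n
    refine ⟨E.card, E, hEB, rfl, fun A hA => ?_⟩
    obtain ⟨Y, hYE, hY⟩ := hsp A hA
    exact ⟨Y, hYE, fun i hi => by rw [← Set.image_iterate_eq]; exact hY i hi⟩
  obtain ⟨E, hEB, hcard, hsp⟩ := Nat.sInf_mem hne
  rw [Paper.spanIn, ← hcard]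
  apply span_lower hd hε2 n hEB
  intro A hA
  obtain ⟨Y, hYE, hY⟩ := hsp A hA
  exact ⟨Y, hYE, fun i hi => by rw [Set.image_iterate_eq]; exact hY i hi⟩

end Metric
end
end SubshiftPf


open Paper Filter in
/-- Let `Σ₂ = {0,1}^ℤ` carry the metric `d(x,y) = 2^{-min{|k| : x_k ≠ y_k}}`
(for `x ≠ y`), `σ` the shift, `p` the point whose only `1` is at coordinate `0`, and `S` the
closure of the `σ`-orbit of `p`.  Then the induced hyperspace map `σ_K` on the nonempty closed
subsets of `S` (with the Hausdorff distance) has topological entropy `log 2`; moreover its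
generalized entropy is exactly the exponential order of growth `[2^n]`: the spanning numbers
are `≤ C·2^n` at every scale, and `≥ c·2^n` at some scale. -/
theorem induced_hyperspace_of_single_one_subshift
    [inst : MetricSpace (ℤ → Bool)]
    (hdist : ∀ x y : ℤ → Bool, x ≠ y →
      dist x y = (2 : ℝ) ^ (-((sInf {m : ℕ | ∃ k : ℤ, k.natAbs = m ∧ x k ≠ y k} : ℕ) : ℤ))) :
    let σ : (ℤ → Bool) → (ℤ → Bool) := fun x k => x (k + 1)
    let p : ℤ → Bool := fun k => decide (k = 0)
    let S : Set (ℤ → Bool) := closure {y | ∃ n : ℤ, y = fun k => p (k + n)}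
    let B : Set (Set (ℤ → Bool)) := {A | A.Nonempty ∧ IsClosed A ∧ A ⊆ S}
    let σK : Set (ℤ → Bool) → Set (ℤ → Bool) := fun A => σ '' A
    Filter.Tendsto (fun ε : ℝ =>
        Filter.limsup
          (fun n : ℕ =>
            ENNReal.ofReal (Real.log (spanIn Metric.hausdorffDist σK B n ε) / n))
          Filter.atTop)
      (nhdsWithin 0 (Set.Ioi 0)) (nhds (ENNReal.ofReal (Real.log 2))) ∧
    (∀ ε > (0 : ℝ), ∃ C > (0 : ℝ), ∀ n : ℕ,
        (spanIn Metric.hausdorffDist σK B n ε : ℝ) ≤ C * 2 ^ n) ∧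
    (∃ ε > (0 : ℝ), ∃ c > (0 : ℝ), ∀ n : ℕ,
        c * 2 ^ n ≤ (spanIn Metric.hausdorffDist σK B n ε : ℝ)) := by
  intro σ p S B σK
  have hS : S = SubshiftPf.S' := by
    show closure {y : ℤ → Bool | ∃ n : ℤ, y = fun k => p (k + n)} = SubshiftPf.S'
    have horb : {y : ℤ → Bool | ∃ n : ℤ, y = fun k => p (k + n)} = Set.range SubshiftPf.q :=
      SubshiftPf.orbit_eq
    rw [horb, SubshiftPf.closure_orbit]
  have hB : B = SubshiftPf.B' := by
    show {A : Set (ℤ → Bool) | A.Nonempty ∧ IsClosed A ∧ A ⊆ S} = SubshiftPf.B'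
    rw [hS]
    rfl
  have hσK : σK = Set.image SubshiftPf.σ₀ := rfl
  have hkey : ∀ (n : ℕ) (ε : ℝ), spanIn Metric.hausdorffDist σK B n ε
      = Paper.spanIn Metric.hausdorffDist (Set.image SubshiftPf.σ₀) SubshiftPf.B' n ε := by
    intro n ε
    rw [hσK, hB]
  have hmain : ∀ ε : ℝ, 0 < ε → ε ≤ 1/2 →
      Filter.Tendsto (fun n : ℕ =>
        Real.log (spanIn Metric.hausdorffDist σK B n ε) / n) atTop (nhds (Real.log 2)) := by
    intro ε hε hε2
    obtain ⟨C, hC0, hCb⟩ := SubshiftPf.spanIn_upper hdist hε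
    have hlow : ∀ n : ℕ, (2:ℝ)^n ≤ (spanIn Metric.hausdorffDist σK B n ε : ℝ) := by
      intro n
      rw [hkey]
      exact_mod_cast SubshiftPf.spanIn_lower hdist hε hε2 n
    have hupp : ∀ n : ℕ, (spanIn Metric.hausdorffDist σK B n ε : ℝ) ≤ (C : ℝ) * 2^n := by
      intro n
      rw [hkey]
      have := hCb n
      push_cast
      exact_mod_cast this
    have hPpos : ∀ n : ℕ, (0:ℝ) < (spanIn Metric.hausdorffDist σK B n ε : ℝ) :=
      fun n => lt_of_lt_of_le (by positivity) (hlow n)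
    have hCpos : (0:ℝ) < (C : ℝ) := by exact_mod_cast hC0
    apply tendsto_of_tendsto_of_tendsto_of_le_of_le'
      (g := fun _ : ℕ => Real.log 2) (h := fun n : ℕ => Real.log C / n + Real.log 2)
    · exact tendsto_const_nhds
    · have h0 := (tendsto_const_div_atTop_nhds_zero_nat (Real.log C)).add
        (tendsto_const_nhds (x := Real.log 2) (f := atTop))
      simpa using h0
    · filter_upwards [Filter.eventually_ge_atTop 1] with n hn
      have hn' : (0:ℝ) < (n:ℝ) := by exact_mod_cast hn
      have h1 : Real.log ((2:ℝ)^n) ≤ Real.log (spanIn Metric.hausdorffDist σK B n ε) :=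
        Real.log_le_log (by positivity) (hlow n)
      rw [Real.log_pow] at h1
      rw [le_div_iff₀ hn']
      calc Real.log 2 * n = (n:ℝ) * Real.log 2 := by ring
        _ ≤ _ := h1
    · filter_upwards [Filter.eventually_ge_atTop 1] with n hn
      have hn' : (0:ℝ) < (n:ℝ) := by exact_mod_cast hn
      have h2 : Real.log (spanIn Metric.hausdorffDist σK B n ε) ≤ Real.log ((C:ℝ) * 2^n) :=
        Real.log_le_log (hPpos n) (hupp n)
      rw [Real.log_mul hCpos.ne' (pow_ne_zero _ two_ne_zero), Real.log_pow] at h2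
      rw [div_le_iff₀ hn']
      calc Real.log (spanIn Metric.hausdorffDist σK B n ε)
          ≤ Real.log C + (n:ℝ) * Real.log 2 := h2
        _ = (Real.log C / n + Real.log 2) * n := by field_simp
  refine ⟨?_, ?_, ?_⟩
  · have heq : ∀ᶠ ε in nhdsWithin (0:ℝ) (Set.Ioi 0),
        Filter.limsup (fun n : ℕ =>
          ENNReal.ofReal (Real.log (spanIn Metric.hausdorffDist σK B n ε) / n)) atTop
          = ENNReal.ofReal (Real.log 2) := by
      filter_upwards [Ioc_mem_nhdsGT (by norm_num : (0:ℝ) < 1/2)] with ε hε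
      have ht := hmain ε hε.1 hε.2
      have hcomp := (ENNReal.continuous_ofReal.tendsto (Real.log 2)).comp ht
      exact hcomp.limsup_eq
    exact Filter.Tendsto.congr' (heq.mono fun ε h => h.symm) tendsto_const_nhds
  · intro ε hε
    obtain ⟨C, hC0, hCb⟩ := SubshiftPf.spanIn_upper hdist hε
    refine ⟨(C : ℝ), by exact_mod_cast hC0, fun n => ?_⟩
    rw [hkey]
    have := hCb n
    push_cast
    exact_mod_cast this
  · refine ⟨1/2, by norm_num, 1, one_pos, fun n => ?_⟩
    rw [one_mul, hkey]
    exact_mod_cast SubshiftPf.spanIn_lower hdist (by norm_num) (le_refl _) n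
end
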